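/- arXiv:1812.06715 — 5 statements merged into one kernel-verified Lean document; each statement's English description precedes it below -/
import Mathlib

section
/- The path graph P_n on n ≥ 3 vertices is antimagic: there exists a bijection φ from its n−1 edges to {1,…,n−1} such that for any two distinct vertices u, v, the sum of labels of edges incident to u differs from the sum of labels of edges incident to v. -/
open SimpleGraph Finset
open scoped Classical

private def pg (n i : ℕ) : ℕ :=
  if n % 2 = 0 ∧ i = n - 3 then n - 1
  else if n % 2 = 0 ∧ i = n - 2 then n - 2
  else i + 1

private lemma pg_inj {n i j : ℕ} (hn : 3 ≤ n) (hi : i + 1 < n) (hj : j + 1 < n)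
    (h : pg n i = pg n j) : i = j := by
  unfold pg at h; split_ifs at h <;> omega

private lemma pg_mem {n i : ℕ} (hn : 3 ≤ n) (hi : i + 1 < n) :
    1 ≤ pg n i ∧ pg n i ≤ n - 1 := by
  unfold pg; split_ifs <;> omega

private lemma pg_surj {n k : ℕ} (hn : 3 ≤ n) (hk1 : 1 ≤ k) (hk2 : k ≤ n - 1) :
    ∃ i, i + 1 < n ∧ pg n i = k := by
  by_cases h1 : n % 2 = 0 ∧ k = n - 1
  · exact ⟨n - 3, by omega, by unfold pg; split_ifs <;> omega⟩
  by_cases h2 : n % 2 = 0 ∧ k = n - 2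
  · exact ⟨n - 2, by omega, by unfold pg; split_ifs <;> omega⟩
  · exact ⟨k - 1, by omega, by unfold pg; split_ifs <;> omega⟩

private lemma filt_mid (n : ℕ) (u : Fin n) (h0 : 0 < u.val) (h1 : u.val < n - 1) :
    Finset.univ.filter (fun e => e ∈ (SimpleGraph.pathGraph n).edgeSet ∧ u ∈ e) =
    {s((⟨u.val - 1, by omega⟩ : Fin n), u), s(u, (⟨u.val + 1, by omega⟩ : Fin n))} := by
  ext e
  induction e with
  | _ a b =>
    simp only [mem_filter, mem_univ, true_and, SimpleGraph.mem_edgeSet, pathGraph_adj,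
      Sym2.mem_iff, mem_insert, mem_singleton, Sym2.eq_iff, Fin.ext_iff]
    omega

private lemma filt_first (n : ℕ) (u : Fin n) (h0 : u.val = 0) (hn : 3 ≤ n) :
    Finset.univ.filter (fun e => e ∈ (SimpleGraph.pathGraph n).edgeSet ∧ u ∈ e) =
    {s(u, (⟨1, by omega⟩ : Fin n))} := by
  ext e
  induction e with
  | _ a b =>
    simp only [mem_filter, mem_univ, true_and, SimpleGraph.mem_edgeSet, pathGraph_adj,
      Sym2.mem_iff, mem_singleton, Sym2.eq_iff, Fin.ext_iff]
    omega

private lemma filt_last (n : ℕ) (u : Fin n) (h0 : u.val = n - 1) (hn : 3 ≤ n) :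
    Finset.univ.filter (fun e => e ∈ (SimpleGraph.pathGraph n).edgeSet ∧ u ∈ e) =
    {s((⟨n - 2, by omega⟩ : Fin n), u)} := by
  ext e
  induction e with
  | _ a b =>
    simp only [mem_filter, mem_univ, true_and, SimpleGraph.mem_edgeSet, pathGraph_adj,
      Sym2.mem_iff, mem_singleton, Sym2.eq_iff, Fin.ext_iff]
    omega

/-- vertex sum, as a function of the index. -/
private def pS (n u : ℕ) : ℕ :=
  if u = 0 then pg n 0
  else if u = n - 1 then pg n (n - 2)
  else pg n (u - 1) + pg n u

set_option maxHeartbeats 1000000 in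
private lemma pS_inj {n u v : ℕ} (hn : 3 ≤ n) (hu : u < n) (hv : v < n)
    (huv : u ≠ v) : pS n u ≠ pS n v := by
  unfold pS pg; split_ifs <;> omega

/-- The path graph on n ≥ 3 vertices is antimagic: there is a
bijection φ from its edges to {1,…,n−1} such that any two distinct vertices have
different sums of labels over incident edges. -/
theorem stmt_0 (n : ℕ) (hn : 3 ≤ n) :
    ∃ φ : Sym2 (Fin n) → ℕ,
      Set.BijOn φ (SimpleGraph.pathGraph n).edgeSet (Set.Icc 1 (n - 1)) ∧
      ∀ u v : Fin n, u ≠ v →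
        (∑ e ∈ Finset.univ.filter
            (fun e => e ∈ (SimpleGraph.pathGraph n).edgeSet ∧ u ∈ e), φ e) ≠
        (∑ e ∈ Finset.univ.filter
            (fun e => e ∈ (SimpleGraph.pathGraph n).edgeSet ∧ v ∈ e), φ e) := by
  set φ : Sym2 (Fin n) → ℕ :=
    Sym2.lift ⟨fun a b => pg n (min a.val b.val), fun a b => by simp only []; rw [Nat.min_comm]⟩ with hφ
  have hval : ∀ a b : Fin n, a.val ≤ b.val → φ s(a, b) = pg n a.val := by
    intro a b h
    simp [hφ, Nat.min_eq_left h]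
  -- edges are of canonical form
  have hcanon : ∀ e ∈ (pathGraph n).edgeSet,
      ∃ a b : Fin n, a.val + 1 = b.val ∧ e = s(a, b) := by
    intro e he
    induction e with
    | _ a b =>
      rw [SimpleGraph.mem_edgeSet, pathGraph_adj] at he
      rcases he with h | h
      · exact ⟨a, b, h, rfl⟩
      · exact ⟨b, a, h, Sym2.eq_swap⟩
  -- vertex sums
  have hsum : ∀ u : Fin n,
      (∑ e ∈ Finset.univ.filter
          (fun e => e ∈ (SimpleGraph.pathGraph n).edgeSet ∧ u ∈ e), φ e) = pS n u.val := by
    intro u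
    have hu : u.val < n := u.isLt
    by_cases h0 : u.val = 0
    · rw [filt_first n u h0 hn, Finset.sum_singleton, hval u ⟨1, by omega⟩ (by simp [h0]),
        pS, if_pos h0, h0]
    · by_cases h1 : u.val = n - 1
      · rw [filt_last n u h1 hn, Finset.sum_singleton,
          hval ⟨n - 2, by omega⟩ u (by simp only [Fin.val_mk]; omega), pS, if_neg h0, if_pos h1]
      · rw [filt_mid n u (by omega) (by omega)]
        rw [Finset.sum_pair (by
          rw [Ne, Sym2.eq_iff]
          push_neg
          constructor <;> intro h <;> simp_all [Fin.ext_iff] <;> omega)]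
        rw [hval ⟨u.val - 1, by omega⟩ u (by simp only [Fin.val_mk]; omega),
          hval u ⟨u.val + 1, by omega⟩ (by simp only [Fin.val_mk]; omega), pS, if_neg h0, if_neg h1]
  refine ⟨φ, ⟨?_, ?_, ?_⟩, ?_⟩
  · -- MapsTo
    intro e he
    obtain ⟨a, b, hab, rfl⟩ := hcanon e he
    rw [hval a b (by omega)]
    have := pg_mem (i := a.val) hn (by have := b.isLt; omega)
    exact ⟨this.1, this.2⟩
  · -- InjOn
    intro e1 h1 e2 h2 heq
    obtain ⟨a, b, hab, rfl⟩ := hcanon e1 h1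
    obtain ⟨c, d, hcd, rfl⟩ := hcanon e2 h2
    rw [hval a b (by omega), hval c d (by omega)] at heq
    have hac : a.val = c.val :=
      pg_inj hn (by have := b.isLt; omega) (by have := d.isLt; omega) heq
    have : a = c := Fin.ext hac
    subst this
    have : b = d := Fin.ext (by omega)
    subst this
    rfl
  · -- SurjOn
    intro k hk
    obtain ⟨hk1, hk2⟩ := hk
    obtain ⟨i, hi, hpg⟩ := pg_surj hn hk1 hk2
    refine ⟨s((⟨i, by omega⟩ : Fin n), (⟨i + 1, hi⟩ : Fin n)), ?_, ?_⟩
    · rw [SimpleGraph.mem_edgeSet, pathGraph_adj]; left; rfl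
    · rw [hval _ _ (by simp)]; exact hpg
  · intro u v huv
    rw [hsum u, hsum v]
    exact pS_inj hn u.isLt v.isLt (fun h => huv (Fin.ext h))
end

section
/- Let p ≥ 1 and m ≥ p be integers, and consider a labeling of a path (v_0,…,v_p) where edge e_i = {v_{i−1}, v_i} receives label φ(e_i) = ⌈i/2⌉ if i ≢ p (mod 2), and φ(e_i) = m − ⌊p/2⌋ + ⌈i/2⌉ if i ≡ p (mod 2). Then the function g(i) = φ(e_i) + φ(e_{i+1}) for 1 ≤ i ≤ p−1 is strictly increasing in i. -/
/-- With path-edge labels φ(e_i) = ⌈i/2⌉ for i ≢ p (mod 2) and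
φ(e_i) = m − ⌊p/2⌋ + ⌈i/2⌉ for i ≡ p (mod 2), the consecutive-pair sum
g(i) = φ(e_i) + φ(e_{i+1}) is strictly increasing on 1 ≤ i ≤ p−1. -/
theorem stmt_2 (p m : ℕ) (hp : 1 ≤ p) (hm : p ≤ m)
    (φ : ℕ → ℕ)
    (hφ : ∀ i, 1 ≤ i → i ≤ p →
      φ i = if i % 2 = p % 2 then (i + 1) / 2 else m - p / 2 + (i + 1) / 2) :
    ∀ i j, 1 ≤ i → i < j → j ≤ p - 1 →
      φ i + φ (i + 1) < φ j + φ (j + 1) := by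
  have key : ∀ i, 1 ≤ i → i ≤ p - 1 → φ i + φ (i + 1) = m - p / 2 + (i + 1) := by
    intro i h1 h2
    rw [hφ i h1 (by omega), hφ (i + 1) (by omega) (by omega)]
    rcases eq_or_ne (i % 2) (p % 2) with h | h
    · rw [if_pos h, if_neg (by omega)]
      omega
    · rw [if_neg h, if_pos (by omega)]
      omega
  intro i j h1 h2 h3
  rw [key i h1 (by omega), key j (by omega) h3]
  omega
end

section
/- Let p ≥ 1 and m ≥ p, and define φ(e_i) = ⌈i/2⌉ if i ≢ p (mod 2) and φ(e_i) = m − ⌊p/2⌋ + ⌈i/2⌉ if i ≡ p (mod 2), for 1 ≤ i ≤ p. Then for all 1 ≤ i ≤ p−1 we have m − ⌊p/2⌋ + 2 ≤ φ(e_i) + φ(e_{i+1}) ≤ m + ⌈p/2⌉. -/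
/-- With the same path-edge labeling, every consecutive-pair sum
satisfies m − ⌊p/2⌋ + 2 ≤ φ(e_i) + φ(e_{i+1}) ≤ m + ⌈p/2⌉. -/
theorem stmt_3 (p m : ℕ) (hp : 1 ≤ p) (hm : p ≤ m)
    (φ : ℕ → ℕ)
    (hφ : ∀ i, 1 ≤ i → i ≤ p →
      φ i = if i % 2 = p % 2 then (i + 1) / 2 else m - p / 2 + (i + 1) / 2) :
    ∀ i, 1 ≤ i → i ≤ p - 1 →
      m - p / 2 + 2 ≤ φ i + φ (i + 1) ∧ φ i + φ (i + 1) ≤ m + (p + 1) / 2 := by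
  intro i h1 h2
  have hip : i ≤ p := by omega
  have hip1 : i + 1 ≤ p := by omega
  rw [hφ i h1 hip, hφ (i + 1) (by omega) hip1]
  by_cases h : i % 2 = p % 2
  · have h' : ¬ (i + 1) % 2 = p % 2 := by omega
    simp only [h, h', if_true, if_false]
    omega
  · have h' : (i + 1) % 2 = p % 2 := by omega
    simp only [h, h', if_true, if_false]
    omega
end

section
/- Every caterpillar admits an antimagic orientation. -/
open Finset
open scoped Classical
namespace Stmt11
variable (k : ℕ) (c : ℕ → ℕ)

def zm (p : ℕ) : Prop := 0 < p ∧ p < k ∧ c p = 0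

noncomputable def nz (q : ℕ) : ℕ :=
  ((Finset.range k).filter (fun z => zm k c z ∧ z ≤ q)).card

/-- count of even-run positions below p -/
noncomputable def cE (p : ℕ) : ℕ :=
  ((Finset.range p).filter (fun q => Even (nz k c q))).card

/-- count of odd-run positions below p -/
noncomputable def cO (p : ℕ) : ℕ :=
  ((Finset.range p).filter (fun q => ¬ Even (nz k c q))).card

/-- count of positions below p in run s -/
noncomputable def cS (p s : ℕ) : ℕ :=
  ((Finset.range p).filter (fun q => nz k c q = s)).card

/-- count of positions after p (below k) in the same run as p -/
noncomputable def cA (p : ℕ) : ℕ :=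
  ((Finset.Ioo p k).filter (fun q => nz k c q = nz k c p)).card

/-- count of odd-run positions (below k) in runs with index ≤ s -/
noncomputable def cH (s : ℕ) : ℕ :=
  ((Finset.range k).filter (fun q => ¬ Even (nz k c q) ∧ nz k c q ≤ s)).card

/-- the spine labels: a permutation of 1..k -/
noncomputable def bZ (p : ℕ) : ℤ :=
  if Even (nz k c p) then 1 + (cE k c p : ℤ)
  else (k : ℤ) + 1 + (cS k c p (nz k c p) : ℤ) - (cO k c (p+1) : ℤ) - (cA k c p : ℤ)

lemma cE_add_cO (p : ℕ) : cE k c p + cO k c p = p := by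
  unfold cE cO
  rw [Finset.card_filter_add_card_filter_not, Finset.card_range]

lemma cE_succ (p : ℕ) (h : Even (nz k c p)) : cE k c (p+1) = cE k c p + 1 := by
  unfold cE
  rw [Finset.range_add_one, Finset.filter_insert, if_pos h,
    Finset.card_insert_of_notMem (by simp)]

lemma cE_succ_odd (p : ℕ) (h : ¬ Even (nz k c p)) : cE k c (p+1) = cE k c p := by
  unfold cE
  rw [Finset.range_add_one, Finset.filter_insert, if_neg h]

lemma cO_succ (p : ℕ) (h : ¬ Even (nz k c p)) : cO k c (p+1) = cO k c p + 1 := by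
  unfold cO
  rw [Finset.range_add_one, Finset.filter_insert, if_pos h,
    Finset.card_insert_of_notMem (by simp)]

lemma cO_succ_even (p : ℕ) (h : Even (nz k c p)) : cO k c (p+1) = cO k c p := by
  unfold cO
  rw [Finset.range_add_one, Finset.filter_insert, if_neg (by simpa using h)]

lemma cS_succ (p s : ℕ) (h : nz k c p = s) : cS k c (p+1) s = cS k c p s + 1 := by
  unfold cS
  rw [Finset.range_add_one, Finset.filter_insert, if_pos h,
    Finset.card_insert_of_notMem (by simp)]

lemma cS_succ_ne (p s : ℕ) (h : nz k c p ≠ s) : cS k c (p+1) s = cS k c p s := by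
  unfold cS
  rw [Finset.range_add_one, Finset.filter_insert, if_neg h]


lemma nz_mono : Monotone (nz k c) := by
  intro a b hab
  apply Finset.card_le_card
  apply Finset.monotone_filter_right
  intro z _ hz
  exact ⟨hz.1, hz.2.trans hab⟩

lemma nz_zero : nz k c 0 = 0 := by
  unfold nz
  rw [Finset.card_eq_zero, Finset.filter_eq_empty_iff]
  rintro z _ ⟨⟨hz, _, _⟩, hz0⟩
  omega

lemma nz_succ_of_not (p : ℕ) (h : ¬ zm k c (p+1)) : nz k c (p+1) = nz k c p := by
  unfold nz
  congr 1
  apply Finset.filter_congr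
  intro z hz
  simp only [Finset.mem_range] at hz
  constructor
  · rintro ⟨hzm, hle⟩
    refine ⟨hzm, ?_⟩
    rcases Nat.lt_or_ge z (p+1) with h1 | h1
    · omega
    · exfalso; have : z = p + 1 := by omega
      exact h (this ▸ hzm)
  · rintro ⟨hzm, hle⟩; exact ⟨hzm, by omega⟩

lemma nz_succ_of_zm (p : ℕ) (h : zm k c (p+1)) : nz k c (p+1) = nz k c p + 1 := by
  unfold nz
  have : ((Finset.range k).filter (fun z => zm k c z ∧ z ≤ p + 1))
      = insert (p+1) ((Finset.range k).filter (fun z => zm k c z ∧ z ≤ p)) := by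
    ext z
    simp only [Finset.mem_insert, Finset.mem_filter, Finset.mem_range]
    constructor
    · rintro ⟨hzk, hzm, hle⟩
      rcases Nat.lt_or_ge z (p+1) with h1 | h1
      · right; exact ⟨hzk, hzm, by omega⟩
      · left; omega
    · rintro (rfl | ⟨hzk, hzm, hle⟩)
      · exact ⟨h.2.1, h, le_refl _⟩
      · exact ⟨hzk, hzm, by omega⟩
  rw [this, Finset.card_insert_of_notMem]
  simp only [Finset.mem_filter, Finset.mem_range]
  rintro ⟨_, _, hle⟩; omega

lemma nz_const (a b : ℕ) (hab : a ≤ b) (h : ∀ r, a < r → r ≤ b → ¬ zm k c r) :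
    nz k c b = nz k c a := by
  induction b, hab using Nat.le_induction with
  | base => rfl
  | succ n hn ih =>
    rw [nz_succ_of_not k c n (h (n+1) (by omega) (le_refl _)),
      ih (fun r h1 h2 => h r h1 (by omega))]

lemma nz_lt_of_zm (q z : ℕ) (hq : q < z) (hz : zm k c z) : nz k c q < nz k c z := by
  have h1 : nz k c q ≤ nz k c (z-1) := nz_mono k c (by omega)
  have h2 : nz k c z = nz k c (z-1) + 1 := by
    have : z - 1 + 1 = z := by omega
    rw [← this] at hz ⊢
    exact nz_succ_of_zm k c _ hz
  omega


lemma cA_pred (p : ℕ) (hp : 0 < p) (hpk : p < k) (h : nz k c (p-1) = nz k c p) :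
    cA k c (p-1) = cA k c p + 1 := by
  unfold cA
  have hset : (Finset.Ioo (p-1) k) = insert p (Finset.Ioo p k) := by
    ext q; simp only [Finset.mem_Ioo, Finset.mem_insert]; omega
  rw [hset, h, Finset.filter_insert, if_pos rfl,
    Finset.card_insert_of_notMem (by simp)]

lemma bZ_step (p : ℕ) (hp : 0 < p) (hpk : p < k) (h : ¬ zm k c p) :
    bZ k c p = bZ k c (p-1) + 1 := by
  have hnz : nz k c p = nz k c (p-1) := by
    have hh : p - 1 + 1 = p := by omega
    rw [← hh]; rw [← hh] at h; exact nz_succ_of_not k c _ h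
  have hp1 : p - 1 + 1 = p := by omega
  unfold bZ
  rcases Nat.even_or_odd (nz k c p) with he | ho
  · rw [if_pos he, if_pos (hnz ▸ he)]
    have : cE k c p = cE k c (p-1) + 1 := by
      have := cE_succ k c (p-1) (hnz ▸ he)
      rwa [hp1] at this
    rw [this]; push_cast; ring
  · have ho' : ¬ Even (nz k c p) := Nat.not_even_iff_odd.mpr ho
    rw [if_neg ho', if_neg (hnz ▸ ho')]
    have h1 : cS k c p (nz k c p) = cS k c (p-1) (nz k c (p-1)) + 1 := by
      have h2 := cS_succ k c (p-1) (nz k c (p-1)) rfl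
      rw [hp1] at h2; rw [hnz]; exact h2
    have h2 : cO k c (p+1) = cO k c p + 1 := cO_succ k c p ho'
    have h3 : cO k c ((p-1)+1) = cO k c p := by rw [hp1]
    have h4 : cA k c (p-1) = cA k c p + 1 := cA_pred k c p hp hpk (by rw [hnz])
    rw [h1, h2, h4, h3]
    push_cast; ring

lemma card_le_of_disjoint_union {α : Type*} [DecidableEq α] (A B C : Finset α)
    (hd : Disjoint A B) (hA : A ⊆ C) (hB : B ⊆ C) : A.card + B.card ≤ C.card := by
  rw [← Finset.card_union_of_disjoint hd]
  exact Finset.card_le_card (Finset.union_subset hA hB)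

lemma odd_lower (p : ℕ) (hpk : p < k) (ho : ¬ Even (nz k c p)) :
    (k : ℤ) + 1 - (cH k c (nz k c p) : ℤ) ≤ bZ k c p := by
  unfold bZ
  rw [if_neg ho]
  have key : cO k c (p+1) + cA k c p ≤ cH k c (nz k c p) := by
    apply card_le_of_disjoint_union
    · rw [Finset.disjoint_left]
      intro q hq1 hq2
      simp only [Finset.mem_filter, Finset.mem_range, Finset.mem_Ioo] at hq1 hq2
      omega
    · intro q hq
      simp only [Finset.mem_filter, Finset.mem_range] at hq ⊢
      exact ⟨by omega, hq.2, nz_mono k c (by omega : q ≤ p)⟩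
    · intro q hq
      simp only [Finset.mem_filter, Finset.mem_Ioo, Finset.mem_range] at hq ⊢
      exact ⟨hq.1.2, by rw [hq.2]; exact ho, le_of_eq hq.2⟩
  have key' : (cO k c (p+1) : ℤ) + (cA k c p : ℤ) ≤ (cH k c (nz k c p) : ℤ) := by
    exact_mod_cast key
  have hS : (0:ℤ) ≤ (cS k c p (nz k c p) : ℤ) := Int.natCast_nonneg _
  linarith

lemma odd_upper_strict (p' s : ℕ) (hpk : p' < k) (ho : ¬ Even (nz k c p'))
    (hs : s < nz k c p') : bZ k c p' ≤ (k : ℤ) - (cH k c s : ℤ) := by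
  have hins : p' ∉ (Finset.range k).filter (fun q => ¬ Even (nz k c q) ∧ nz k c q ≤ s) := by
    simp only [Finset.mem_filter, Finset.mem_range]
    rintro ⟨_, _, hle⟩; omega
  have key : cS k c p' (nz k c p') +
      (insert p' ((Finset.range k).filter (fun q => ¬ Even (nz k c q) ∧ nz k c q ≤ s))).card
      ≤ cO k c (p'+1) := by
    apply card_le_of_disjoint_union
    · rw [Finset.disjoint_left]
      intro q hq1 hq2
      simp only [Finset.mem_filter, Finset.mem_range] at hq1
      simp only [Finset.mem_insert, Finset.mem_filter, Finset.mem_range] at hq2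
      rcases hq2 with rfl | ⟨_, _, hle⟩
      · omega
      · omega
    · intro q hq
      simp only [Finset.mem_filter, Finset.mem_range] at hq ⊢
      exact ⟨by omega, by rw [hq.2]; exact ho⟩
    · intro q hq
      simp only [Finset.mem_insert, Finset.mem_filter, Finset.mem_range] at hq
      simp only [Finset.mem_filter, Finset.mem_range]
      rcases hq with rfl | ⟨hqk, hodd, hle⟩
      · exact ⟨by omega, ho⟩
      · refine ⟨?_, hodd⟩
        by_contra hcon
        have : nz k c p' ≤ nz k c q := nz_mono k c (by omega)
        omega
  rw [Finset.card_insert_of_notMem hins] at key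
  have key' : (cS k c p' (nz k c p') : ℤ) + (cH k c s : ℤ) + 1 ≤ (cO k c (p'+1) : ℤ) := by
    unfold cH; exact_mod_cast key
  have hA : (0:ℤ) ≤ (cA k c p' : ℤ) := Int.natCast_nonneg _
  unfold bZ
  rw [if_neg ho]
  linarith


lemma bZ_zero (hk : 0 < k) : bZ k c 0 = 1 := by
  unfold bZ
  rw [if_pos (by rw [nz_zero]; exact Even.zero)]
  have : cE k c 0 = 0 := by unfold cE; simp
  rw [this]; simp

lemma bZ_ge_one (p : ℕ) (hpk : p < k) : 1 ≤ bZ k c p := by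
  rcases Nat.even_or_odd (nz k c p) with he | ho
  · unfold bZ; rw [if_pos he]
    have : (0:ℤ) ≤ (cE k c p : ℤ) := Int.natCast_nonneg _
    linarith
  · have ho' := Nat.not_even_iff_odd.mpr ho
    have h1 := odd_lower k c p hpk ho'
    have h2 : cH k c (nz k c p) ≤ k := by
      unfold cH
      calc ((Finset.range k).filter _).card ≤ (Finset.range k).card :=
            Finset.card_filter_le _ _
        _ = k := Finset.card_range k
    have : (cH k c (nz k c p) : ℤ) ≤ (k : ℤ) := by exact_mod_cast h2
    linarith

lemma cE_mono (p p' : ℕ) (h : p ≤ p') : cE k c p ≤ cE k c p' := by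
  apply Finset.card_le_card
  apply Finset.filter_subset_filter
  exact Finset.range_subset_range.mpr h

lemma even_le_cEk (p : ℕ) (hpk : p < k) (he : Even (nz k c p)) :
    bZ k c p ≤ (cE k c k : ℤ) := by
  unfold bZ
  rw [if_pos he]
  have h : cE k c p + 1 ≤ cE k c k := by
    have := cE_succ k c p he
    have h2 : cE k c (p+1) ≤ cE k c k := cE_mono k c _ _ (by omega)
    omega
  have : (cE k c p : ℤ) + 1 ≤ (cE k c k : ℤ) := by exact_mod_cast h
  linarith

lemma cH_le_cOk (s : ℕ) : cH k c s ≤ cO k c k := by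
  unfold cH cO
  apply Finset.card_le_card
  apply Finset.monotone_filter_right
  intro q _ hq; exact hq.1

lemma odd_ge_cEk (p : ℕ) (hpk : p < k) (ho : ¬ Even (nz k c p)) :
    (cE k c k : ℤ) + 1 ≤ bZ k c p := by
  have h1 := odd_lower k c p hpk ho
  have h2 : cH k c (nz k c p) ≤ cO k c k := cH_le_cOk k c _
  have h3 : cE k c k + cO k c k = k := cE_add_cO k c k
  have h2' : (cH k c (nz k c p) : ℤ) ≤ (cO k c k : ℤ) := by exact_mod_cast h2
  have h3' : (cE k c k : ℤ) + (cO k c k : ℤ) = (k : ℤ) := by exact_mod_cast h3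
  linarith

lemma bZ_le_k (p : ℕ) (hpk : p < k) : bZ k c p ≤ (k : ℤ) := by
  rcases Nat.even_or_odd (nz k c p) with he | ho
  · have h1 := even_le_cEk k c p hpk he
    have h2 : cE k c k ≤ k := by
      unfold cE
      calc _ ≤ (Finset.range k).card := Finset.card_filter_le _ _
        _ = k := Finset.card_range k
    have : (cE k c k : ℤ) ≤ (k:ℤ) := by exact_mod_cast h2
    linarith
  · have ho' := Nat.not_even_iff_odd.mpr ho
    -- cO (p+1) ≥ cS p (nz p) + 1
    have key : cS k c p (nz k c p) + 1 ≤ cO k c (p+1) := by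
      have hsub : insert p ((Finset.range p).filter (fun q => nz k c q = nz k c p))
          ⊆ (Finset.range (p+1)).filter (fun q => ¬ Even (nz k c q)) := by
        intro q hq
        simp only [Finset.mem_insert, Finset.mem_filter, Finset.mem_range] at hq ⊢
        rcases hq with rfl | ⟨hq1, hq2⟩
        · exact ⟨by omega, ho'⟩
        · exact ⟨by omega, by rw [hq2]; exact ho'⟩
      have hcard := Finset.card_le_card hsub
      rw [Finset.card_insert_of_notMem (by simp)] at hcard
      unfold cS cO; omega
    have key' : (cS k c p (nz k c p) : ℤ) + 1 ≤ (cO k c (p+1) : ℤ) := by exact_mod_cast key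
    have hA : (0:ℤ) ≤ (cA k c p : ℤ) := Int.natCast_nonneg _
    unfold bZ
    rw [if_neg ho']
    linarith

lemma nz_squeeze (p q p' : ℕ) (h1 : p ≤ q) (h2 : q ≤ p') (h : nz k c p = nz k c p') :
    nz k c q = nz k c p := by
  have a1 := nz_mono k c h1
  have a2 := nz_mono k c h2
  omega

lemma filter_range_split {P : ℕ → Prop} [DecidablePred P] (p p' : ℕ) (h : p ≤ p')
    (hall : ∀ q, p ≤ q → q < p' → P q) :
    ((Finset.range p').filter (fun q => P q)).card
      = ((Finset.range p).filter (fun q => P q)).card + (p' - p) := by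
  have hset : (Finset.range p').filter (fun q => P q)
      = ((Finset.range p).filter (fun q => P q)) ∪ Finset.Ico p p' := by
    ext q
    simp only [Finset.mem_filter, Finset.mem_range, Finset.mem_union, Finset.mem_Ico]
    constructor
    · rintro ⟨hq, hPq⟩
      rcases Nat.lt_or_ge q p with h1 | h1
      · left; exact ⟨h1, hPq⟩
      · right; omega
    · rintro (⟨hq, hPq⟩ | ⟨h1, h2⟩)
      · exact ⟨by omega, hPq⟩
      · exact ⟨h2, hall q h1 h2⟩
  rw [hset, Finset.card_union_of_disjoint, Nat.card_Ico]
  rw [Finset.disjoint_left]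
  intro q hq1 hq2
  simp only [Finset.mem_filter, Finset.mem_range] at hq1
  simp only [Finset.mem_Ico] at hq2
  omega

lemma odd_same_run_strict (p p' : ℕ) (hpp : p < p') (hp'k : p' < k)
    (ho : ¬ Even (nz k c p)) (hrun : nz k c p = nz k c p') :
    bZ k c p < bZ k c p' := by
  have ho' : ¬ Even (nz k c p') := by rw [← hrun]; exact ho
  have hS : cS k c p' (nz k c p') = cS k c p (nz k c p) + (p' - p) := by
    unfold cS
    rw [← hrun]
    exact filter_range_split (P := fun q => nz k c q = nz k c p) p p' (by omega)
      (fun q h1 h2 => nz_squeeze k c p q p' h1 (by omega) hrun)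
  have hO : cO k c (p'+1) = cO k c (p+1) + ((p'+1) - (p+1)) := by
    unfold cO
    exact filter_range_split (P := fun q => ¬ Even (nz k c q)) (p+1) (p'+1) (by omega)
      (fun q h1 h2 => by
        have hq : nz k c q = nz k c p := nz_squeeze k c p q p' (by omega) (by omega) hrun
        show ¬ Even (nz k c q)
        rw [hq]; exact ho)
  have hA : cA k c p = cA k c p' + (p' - p) := by
    unfold cA
    have hset : (Finset.Ioo p k).filter (fun q => nz k c q = nz k c p)
        = ((Finset.Ioo p' k).filter (fun q => nz k c q = nz k c p')) ∪ Finset.Ioc p p' := by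
      ext q
      simp only [Finset.mem_filter, Finset.mem_Ioo, Finset.mem_union, Finset.mem_Ioc]
      constructor
      · rintro ⟨⟨h1, h2⟩, h3⟩
        rcases Nat.lt_or_ge p' q with h4 | h4
        · left; exact ⟨⟨h4, h2⟩, by rw [h3, hrun]⟩
        · right; omega
      · rintro (⟨⟨h1, h2⟩, h3⟩ | ⟨h1, h2⟩)
        · exact ⟨⟨by omega, h2⟩, by rw [h3, hrun]⟩
        · exact ⟨⟨h1, by omega⟩, nz_squeeze k c p q p' (by omega) h2 hrun⟩
    rw [hset, Finset.card_union_of_disjoint, Nat.card_Ioc]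
    rw [Finset.disjoint_left]
    intro q hq1 hq2
    simp only [Finset.mem_filter, Finset.mem_Ioo] at hq1
    simp only [Finset.mem_Ioc] at hq2
    omega
  unfold bZ
  rw [if_neg ho, if_neg ho', hS, hO, hA]
  push_cast
  omega

lemma bZ_inj (p p' : ℕ) (hp : p < k) (hp' : p' < k) (hne : p ≠ p') :
    bZ k c p ≠ bZ k c p' := by
  wlog hlt : p < p' generalizing p p'
  · exact (this p' p hp' hp (Ne.symm hne) (by omega)).symm
  rcases Nat.even_or_odd (nz k c p) with he | ho <;>
    rcases Nat.even_or_odd (nz k c p') with he' | ho'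
  · -- both even: strict mono
    have h : cE k c p + 1 ≤ cE k c p' := by
      have hsub : insert p ((Finset.range p).filter (fun q => Even (nz k c q)))
          ⊆ (Finset.range p').filter (fun q => Even (nz k c q)) := by
        intro q hq
        simp only [Finset.mem_insert, Finset.mem_filter, Finset.mem_range] at hq ⊢
        rcases hq with rfl | ⟨h1, h2⟩
        · exact ⟨hlt, he⟩
        · exact ⟨by omega, h2⟩
      have := Finset.card_le_card hsub
      rw [Finset.card_insert_of_notMem (by simp)] at this
      unfold cE; omega
    unfold bZ
    rw [if_pos he, if_pos he']
    have : (cE k c p : ℤ) + 1 ≤ (cE k c p' : ℤ) := by exact_mod_cast h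
    intro hcon; omega
  · -- even vs odd
    have h1 := even_le_cEk k c p hp he
    have h2 := odd_ge_cEk k c p' hp' (Nat.not_even_iff_odd.mpr ho')
    intro hcon; omega
  · have h1 := even_le_cEk k c p' hp' he'
    have h2 := odd_ge_cEk k c p hp (Nat.not_even_iff_odd.mpr ho)
    intro hcon; omega
  · -- both odd
    have hoo := Nat.not_even_iff_odd.mpr ho
    have hoo' := Nat.not_even_iff_odd.mpr ho'
    rcases eq_or_ne (nz k c p) (nz k c p') with hrun | hrun
    · exact ne_of_lt (odd_same_run_strict k c p p' hlt hp' hoo hrun)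
    · have hnzlt : nz k c p < nz k c p' := by
        have := nz_mono k c (le_of_lt hlt)
        omega
      have h1 := odd_lower k c p hp hoo
      have h2 := odd_upper_strict k c p' (nz k c p) hp' hoo' hnzlt
      intro hcon; omega


noncomputable def nxt (z : ℕ) : ℕ :=
  if h : ∃ q, z < q ∧ zm k c q then Nat.find h else k

noncomputable def prv (z : ℕ) : ℕ :=
  Nat.findGreatest (zm k c) (z - 1)

lemma nxt_gt (z : ℕ) (hzk : z < k) : z < nxt k c z := by
  by_cases h : ∃ q, z < q ∧ zm k c q
  · rw [nxt, dif_pos h]; exact (Nat.find_spec h).1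
  · rw [nxt, dif_neg h]; exact hzk

lemma nxt_le_k (z : ℕ) : nxt k c z ≤ k := by
  by_cases h : ∃ q, z < q ∧ zm k c q
  · rw [nxt, dif_pos h]; exact le_of_lt (Nat.find_spec h).2.2.1
  · rw [nxt, dif_neg h]

lemma nxt_no_zm (z q : ℕ) (h1 : z < q) (h2 : q < nxt k c z) : ¬ zm k c q := by
  by_cases h : ∃ q, z < q ∧ zm k c q
  · rw [nxt, dif_pos h] at h2
    intro hzm
    exact Nat.find_min h h2 ⟨h1, hzm⟩
  · intro hzm
    exact h ⟨q, h1, hzm⟩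

lemma nxt_zm (z : ℕ) (h : nxt k c z < k) : zm k c (nxt k c z) := by
  by_cases hh : ∃ q, z < q ∧ zm k c q
  · rw [nxt, dif_pos hh] at h ⊢; exact (Nat.find_spec hh).2
  · rw [nxt, dif_neg hh] at h; omega

lemma nxt_le_of_zm (z z' : ℕ) (h1 : z < z') (h2 : zm k c z') : nxt k c z ≤ z' := by
  have h : ∃ q, z < q ∧ zm k c q := ⟨z', h1, h2⟩
  rw [nxt, dif_pos h]
  exact Nat.find_min' h ⟨h1, h2⟩

lemma prv_le (z : ℕ) : prv k c z ≤ z - 1 := Nat.findGreatest_le _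

lemma prv_no (z q : ℕ) (h1 : prv k c z < q) (h2 : q ≤ z - 1) : ¬ zm k c q :=
  Nat.findGreatest_is_greatest h1 h2

lemma prv_ge (z z' : ℕ) (h1 : zm k c z') (h3 : z' ≤ z - 1) : z' ≤ prv k c z :=
  Nat.le_findGreatest h3 h1

lemma prv_zm (z : ℕ) (h : 0 < prv k c z) : zm k c (prv k c z) := by
  by_contra hcon
  have h0 : prv k c z ≠ 0 := by omega
  rw [prv] at h0 hcon h
  rw [Ne, Nat.findGreatest_eq_zero_iff] at h0
  push_neg at h0
  obtain ⟨m, hm1, hm2, hm3⟩ := h0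
  exact hcon (Nat.findGreatest_spec hm2 hm3)

lemma nz_run_next (z q : ℕ) (hz : z ≤ q) (hq : q < nxt k c z) :
    nz k c q = nz k c z :=
  nz_const k c z q hz (fun r h1 h2 => nxt_no_zm k c z r h1 (by omega))

lemma cA_eq_nxt (z : ℕ) (hz : zm k c z) : cA k c z = nxt k c z - z - 1 := by
  unfold cA
  have hset : (Finset.Ioo z k).filter (fun q => nz k c q = nz k c z)
      = Finset.Ioo z (nxt k c z) := by
    ext q
    simp only [Finset.mem_filter, Finset.mem_Ioo]
    constructor
    · rintro ⟨⟨h1, h2⟩, h3⟩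
      refine ⟨h1, ?_⟩
      by_contra hcon
      have hxk : nxt k c z < k := by omega
      have hzm := nxt_zm k c z hxk
      have l1 : nz k c z < nz k c (nxt k c z) :=
        nz_lt_of_zm k c z (nxt k c z) (nxt_gt k c z hz.2.1) hzm
      have l2 : nz k c (nxt k c z) ≤ nz k c q := nz_mono k c (by omega)
      omega
    · rintro ⟨h1, h2⟩
      have hk2 : q < k := lt_of_lt_of_le h2 (nxt_le_k k c z)
      exact ⟨⟨h1, hk2⟩, nz_run_next k c z q (le_of_lt h1) h2⟩
  rw [hset, Nat.card_Ioo]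

lemma cS_z_zero (z : ℕ) (hz : zm k c z) : cS k c z (nz k c z) = 0 := by
  unfold cS
  rw [Finset.card_eq_zero, Finset.filter_eq_empty_iff]
  intro q hq
  simp only [Finset.mem_range] at hq
  have := nz_lt_of_zm k c q z hq hz
  omega

lemma cA_prev_zero (z : ℕ) (hz : zm k c z) : cA k c (z-1) = 0 := by
  unfold cA
  rw [Finset.card_eq_zero, Finset.filter_eq_empty_iff]
  intro q hq
  simp only [Finset.mem_Ioo] at hq
  have hz1 : 0 < z := hz.1
  have h1 : nz k c (z-1) < nz k c z := by
    have hp1 : z - 1 + 1 = z := by omega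
    have h3 := nz_succ_of_zm k c (z-1) (by rwa [hp1])
    rw [hp1] at h3
    omega
  have h2 : nz k c z ≤ nz k c q := nz_mono k c (by omega)
  omega

lemma cS_prev (z : ℕ) (hz : zm k c z) : cS k c (z-1) (nz k c (z-1)) = (z-1) - prv k c z := by
  unfold cS
  have hset : (Finset.range (z-1)).filter (fun q => nz k c q = nz k c (z-1))
      = Finset.Ico (prv k c z) (z-1) := by
    ext q
    simp only [Finset.mem_filter, Finset.mem_range, Finset.mem_Ico]
    have hconst : nz k c (z-1) = nz k c (prv k c z) := by
      apply nz_const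
      · exact prv_le k c z
      · exact fun r h1 h2 => prv_no k c z r h1 h2
    constructor
    · rintro ⟨h1, h2⟩
      refine ⟨?_, h1⟩
      by_contra hcon
      push_neg at hcon
      have hp : 0 < prv k c z := by omega
      have hzm : zm k c (prv k c z) := prv_zm k c z hp
      have := nz_lt_of_zm k c q (prv k c z) hcon hzm
      omega
    · rintro ⟨h1, h2⟩
      refine ⟨h2, ?_⟩
      rw [hconst]
      apply nz_const
      · exact h1
      · exact fun r hr1 hr2 => prv_no k c z r (by omega) (by omega)
  rw [hset, Nat.card_Ico]

lemma sz_odd (z : ℕ) (hz : zm k c z) (ho : ¬ Even (nz k c z)) :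
    bZ k c (z-1) - bZ k c z = (nxt k c z : ℤ) - k - 1 := by
  have hz1 : 0 < z := hz.1
  have hp1 : z - 1 + 1 = z := by omega
  have hnz : nz k c z = nz k c (z-1) + 1 := by
    have h3 := nz_succ_of_zm k c (z-1) (by rwa [hp1])
    rw [hp1] at h3; omega
  have hprev_even : Even (nz k c (z-1)) := by
    rcases Nat.even_or_odd (nz k c (z-1)) with h | h
    · exact h
    · exact absurd (hnz ▸ h.add_one) ho
  have e1 : bZ k c (z-1) = 1 + (cE k c (z-1) : ℤ) := by
    unfold bZ; rw [if_pos hprev_even]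
  have hcS := cS_z_zero k c z hz
  have hcA := cA_eq_nxt k c z hz
  have hO1 : cO k c (z+1) = cO k c z + 1 := cO_succ k c z ho
  have hO2 : cO k c z = cO k c (z-1) := by
    have := cO_succ_even k c (z-1) hprev_even
    rwa [hp1] at this
  have hEO : cE k c (z-1) + cO k c (z-1) = z - 1 := cE_add_cO k c (z-1)
  have e2 : bZ k c z = (k:ℤ) + 1 + (0:ℕ) - (cO k c (z+1) : ℤ) - (cA k c z : ℤ) := by
    unfold bZ; rw [if_neg ho, hcS]
  rw [e1, e2, hcA, hO1, hO2]
  have hnxt1 : z < nxt k c z := nxt_gt k c z hz.2.1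
  have hnxt2 : nxt k c z ≤ k := nxt_le_k k c z
  push_cast
  omega

lemma sz_even (z : ℕ) (hz : zm k c z) (he : Even (nz k c z)) :
    bZ k c (z-1) - bZ k c z = (k : ℤ) - 1 - (prv k c z : ℤ) := by
  have hz1 : 0 < z := hz.1
  have hp1 : z - 1 + 1 = z := by omega
  have hnz : nz k c z = nz k c (z-1) + 1 := by
    have h3 := nz_succ_of_zm k c (z-1) (by rwa [hp1])
    rw [hp1] at h3; omega
  have hprev_odd : ¬ Even (nz k c (z-1)) := by
    intro h
    exact absurd he (by rw [hnz]; exact Nat.not_even_iff_odd.mpr h.add_one)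
  have e1 : bZ k c z = 1 + (cE k c z : ℤ) := by
    unfold bZ; rw [if_pos he]
  have hE : cE k c z = cE k c (z-1) := by
    have := cE_succ_odd k c (z-1) hprev_odd
    rwa [hp1] at this
  have hcS := cS_prev k c z hz
  have hcA := cA_prev_zero k c z hz
  have hO : cO k c z = cO k c (z-1) + 1 := by
    have := cO_succ k c (z-1) hprev_odd
    rwa [hp1] at this
  have hEO : cE k c (z-1) + cO k c (z-1) = z - 1 := cE_add_cO k c (z-1)
  have e2 : bZ k c (z-1) = (k:ℤ) + 1 + (cS k c (z-1) (nz k c (z-1)) : ℤ)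
      - (cO k c ((z-1)+1) : ℤ) - (cA k c (z-1) : ℤ) := by
    unfold bZ; rw [if_neg hprev_odd]
  rw [e1, e2, hp1, hcS, hcA, hO, hE]
  have hple : prv k c z ≤ z - 1 := prv_le k c z
  push_cast
  omega


def key (i : ℕ) : ℕ := (c i * (k+2) + (if i = k then 1 else 0)) * (k+2) + i

noncomputable def st (i : ℕ) : ℕ :=
  k + 1 + ∑ j ∈ (Finset.range (k+1)).filter (fun j => key k c j < key k c i), c j

noncomputable def TT (i : ℕ) : ℕ := ∑ r ∈ Finset.range (c i), (st k c i + r)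

noncomputable def sig (i : ℕ) : ℤ :=
  (TT k c i : ℤ) + (if 1 ≤ i then bZ k c (i-1) else 0) - (if i < k then bZ k c i else 0)

lemma key_inj (i j : ℕ) (hi : i ≤ k) (hj : j ≤ k) (h : key k c i = key k c j) : i = j := by
  have h1 : key k c i % (k+2) = i := by
    unfold key
    rw [Nat.add_comm, Nat.add_mul_mod_self_right]
    exact Nat.mod_eq_of_lt (by omega)
  have h2 : key k c j % (k+2) = j := by
    unfold key
    rw [Nat.add_comm, Nat.add_mul_mod_self_right]
    exact Nat.mod_eq_of_lt (by omega)
  rw [← h1, ← h2, h]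

lemma key_mono_c (i j : ℕ) (hi : i ≤ k) (hj : j ≤ k) (h : c i < c j) :
    key k c i < key k c j := by
  unfold key
  have e1 : (c i * (k+2) + (if i = k then 1 else 0)) * (k+2) + i
      ≤ c i * ((k+2)*(k+2)) + (k+2) + k := by
    have : (if i = k then 1 else 0) ≤ 1 := by split <;> omega
    calc (c i * (k+2) + (if i = k then 1 else 0)) * (k+2) + i
        ≤ (c i * (k+2) + 1) * (k+2) + k := by
          have := Nat.mul_le_mul_right (k+2) (Nat.add_le_add_left this (c i * (k+2)))
          omega
      _ = c i * ((k+2)*(k+2)) + (k+2) + k := by ring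
  have e2 : c j * ((k+2)*(k+2)) ≤ (c j * (k+2) + (if j = k then 1 else 0)) * (k+2) + j := by
    have : c j * ((k+2)*(k+2)) ≤ (c j * (k+2)) * (k+2) := by
      apply Nat.le_of_eq; ring
    have h2 : (c j * (k+2)) * (k+2) ≤ (c j * (k+2) + (if j = k then 1 else 0)) * (k+2) :=
      Nat.mul_le_mul_right _ (by omega)
    omega
  have e3 : c i * ((k+2)*(k+2)) + (k+2) + k < c j * ((k+2)*(k+2)) := by
    have h4 : c i + 1 ≤ c j := h
    have h5 : (c i + 1) * ((k+2)*(k+2)) ≤ c j * ((k+2)*(k+2)) :=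
      Nat.mul_le_mul_right _ h4
    have h6 : (k+2) + k < (k+2)*(k+2) := by nlinarith
    have h7 : (c i + 1) * ((k+2)*(k+2)) = c i * ((k+2)*(k+2)) + (k+2)*(k+2) := by ring
    omega
  omega

lemma key_k_max (i : ℕ) (hi : i ≤ k) (hne : i ≠ k) (hc : c i = c k) :
    key k c i < key k c k := by
  unfold key
  rw [if_neg hne, if_pos rfl, hc]
  have e : (c k * (k+2) + 1) * (k+2) = (c k * (k+2)) * (k+2) + (k+2) := by ring
  have e0 : (c k * (k+2) + 0) * (k+2) = (c k * (k+2)) * (k+2) := by ring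
  omega

lemma st_ge (i : ℕ) : k + 1 ≤ st k c i := by unfold st; omega

lemma st_step (i j : ℕ) (hi : i ≤ k) (h : key k c i < key k c j) :
    st k c i + c i ≤ st k c j := by
  unfold st
  have hsub : insert i ((Finset.range (k+1)).filter (fun q => key k c q < key k c i))
      ⊆ (Finset.range (k+1)).filter (fun q => key k c q < key k c j) := by
    intro q hq
    simp only [Finset.mem_insert, Finset.mem_filter, Finset.mem_range] at hq ⊢
    rcases hq with rfl | ⟨hq1, hq2⟩
    · exact ⟨by omega, h⟩
    · exact ⟨hq1, by omega⟩
  have hnotmem : i ∉ (Finset.range (k+1)).filter (fun q => key k c q < key k c i) := by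
    simp only [Finset.mem_filter, Finset.mem_range]
    rintro ⟨_, hcon⟩; omega
  have := Finset.sum_le_sum_of_subset (f := c) hsub
  rw [Finset.sum_insert hnotmem] at this
  omega

lemma st_le (i : ℕ) (hi : i ≤ k) :
    st k c i + c i ≤ k + 1 + ∑ j ∈ Finset.range (k+1), c j := by
  unfold st
  have hnotmem : i ∉ (Finset.range (k+1)).filter (fun q => key k c q < key k c i) := by
    simp only [Finset.mem_filter, Finset.mem_range]
    rintro ⟨_, hcon⟩; omega
  have hsub : insert i ((Finset.range (k+1)).filter (fun q => key k c q < key k c i))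
      ⊆ Finset.range (k+1) := by
    intro q hq
    simp only [Finset.mem_insert, Finset.mem_filter, Finset.mem_range] at hq ⊢
    rcases hq with rfl | ⟨hq1, _⟩
    · omega
    · exact hq1
  have := Finset.sum_le_sum_of_subset (f := c) hsub
  rw [Finset.sum_insert hnotmem] at this
  omega

lemma label_inj (i j r r' : ℕ) (hi : i ≤ k) (hj : j ≤ k) (hne : i ≠ j)
    (hr : r < c i) (hr' : r' < c j) : st k c i + r ≠ st k c j + r' := by
  wlog hlt : key k c i < key k c j generalizing i j r r'
  · have hne' : key k c j ≠ key k c i := fun h => hne (key_inj k c j i hj hi h).symm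
    exact (this j i r' r hj hi (Ne.symm hne) hr' hr (by omega)).symm
  have := st_step k c i j hi hlt
  omega

lemma TT_ge_st (i : ℕ) (hc : c i ≠ 0) : st k c i ≤ TT k c i := by
  unfold TT
  calc st k c i = st k c i + 0 := by omega
    _ ≤ ∑ r ∈ Finset.range (c i), (st k c i + r) := by
        apply Finset.single_le_sum (f := fun r => st k c i + r)
        · intro r _; omega
        · simp only [Finset.mem_range]; omega

lemma TT_lt_same (i j : ℕ) (hi : i ≤ k) (hj : j ≤ k) (hceq : c i = c j)
    (hc : c i ≠ 0) (h : key k c i < key k c j) : TT k c i < TT k c j := by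
  unfold TT
  rw [← hceq]
  apply Finset.sum_lt_sum_of_nonempty
  · exact Finset.nonempty_range_iff.mpr hc
  · intro r _
    have h1 := st_step k c i j hi h
    omega

lemma TT_cross (i j : ℕ) (hi : i ≤ k) (hj : j ≤ k) (hci : c i ≠ 0)
    (h : c i < c j) : TT k c i + st k c i + 2 ≤ TT k c j := by
  have hkey := key_mono_c k c i j hi hj h
  have hstep := st_step k c i j hi hkey
  have e1 : TT k c j ≥ ∑ r ∈ Finset.range (c j), (st k c i + c i + r) := by
    unfold TT
    apply Finset.sum_le_sum
    intro r _
    omega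
  have e2 : ∑ r ∈ Finset.range (c j), (st k c i + c i + r)
      ≥ ∑ r ∈ Finset.range (c i + 1), (st k c i + c i + r) := by
    apply Finset.sum_le_sum_of_subset
    apply Finset.range_subset_range.mpr
    omega
  have e3 : ∑ r ∈ Finset.range (c i + 1), (st k c i + c i + r)
      = (∑ r ∈ Finset.range (c i), (st k c i + c i + r)) + (st k c i + c i + c i) :=
    Finset.sum_range_succ _ _
  have e4 : ∑ r ∈ Finset.range (c i), (st k c i + c i + r)
      ≥ ∑ r ∈ Finset.range (c i), (st k c i + r) := by
    apply Finset.sum_le_sum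
    intro r _; omega
  have e5 : TT k c i = ∑ r ∈ Finset.range (c i), (st k c i + r) := rfl
  omega

lemma sig_P_eq (i : ℕ) (hk : 0 < k) (hi : i ≤ k) (hc : c i ≠ 0) :
    sig k c i = (TT k c i : ℤ) + (if i = k then bZ k c (k-1) else -1) := by
  unfold sig
  rcases eq_or_ne i k with rfl | hik
  · rw [if_pos rfl, if_pos (by omega), if_neg (lt_irrefl _)]
    ring
  · have hikt : i < k := by omega
    rw [if_neg hik, if_pos hikt]
    rcases Nat.eq_zero_or_pos i with rfl | hi0
    · rw [if_neg (by omega), bZ_zero k c hk]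
      ring
    · rw [if_pos (by omega)]
      have hstep := bZ_step k c i hi0 hikt (by rintro ⟨_, _, hc0⟩; exact hc hc0)
      rw [hstep]; ring

lemma sig_P_ge (i : ℕ) (hi : i ≤ k) (hc : c i ≠ 0) : (k : ℤ) ≤ sig k c i := by
  have hTT : (st k c i : ℤ) ≤ (TT k c i : ℤ) := by exact_mod_cast TT_ge_st k c i hc
  have hst : (k : ℤ) + 1 ≤ (st k c i : ℤ) := by exact_mod_cast st_ge k c i
  rcases Nat.eq_zero_or_pos k with rfl | hk
  · unfold sig
    rw [if_neg (by omega), if_neg (by omega)]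
    omega
  · rw [sig_P_eq k c i hk hi hc]
    by_cases hik : i = k
    · rw [if_pos hik]
      have := bZ_ge_one k c (k-1) (by omega)
      omega
    · rw [if_neg hik]
      omega

lemma sig_Z_eq (z : ℕ) (hz : zm k c z) : sig k c z = bZ k c (z-1) - bZ k c z := by
  unfold sig
  have h1 : TT k c z = 0 := by unfold TT; rw [hz.2.2]; simp
  rw [h1, if_pos (by have := hz.1; omega), if_pos hz.2.1]
  push_cast; ring

lemma sig_Z_bounds (z : ℕ) (hz : zm k c z) :
    1 - (k:ℤ) ≤ sig k c z ∧ sig k c z ≤ (k:ℤ) - 1 := by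
  rw [sig_Z_eq k c z hz]
  have h1 := bZ_ge_one k c (z-1) (by have := hz.2.1; omega)
  have h2 := bZ_le_k k c (z-1) (by have := hz.2.1; omega)
  have h3 := bZ_ge_one k c z hz.2.1
  have h4 := bZ_le_k k c z hz.2.1
  omega

lemma sig_ZZ_ne (z z' : ℕ) (hz : zm k c z) (hz' : zm k c z') (hne : z ≠ z') :
    sig k c z ≠ sig k c z' := by
  wlog hlt : z < z' generalizing z z'
  · exact (this z' z hz' hz (Ne.symm hne) (by omega)).symm
  rw [sig_Z_eq k c z hz, sig_Z_eq k c z' hz']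
  rcases Nat.even_or_odd (nz k c z) with he | ho <;>
    rcases Nat.even_or_odd (nz k c z') with he' | ho'
  · -- both even: k - 1 - prv, prv strictly increases
    rw [sz_even k c z hz he, sz_even k c z' hz' he']
    have h1 : prv k c z ≤ z - 1 := prv_le k c z
    have h2 : z ≤ prv k c z' := prv_ge k c z' z hz (by omega)
    have hz1 : 0 < z := hz.1
    omega
  · -- z even-entering, z' odd-entering : pos vs neg
    rw [sz_even k c z hz he, sz_odd k c z' hz' (Nat.not_even_iff_odd.mpr ho')]
    have h1 : prv k c z ≤ z - 1 := prv_le k c z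
    have h2 : nxt k c z' ≤ k := nxt_le_k k c z'
    have hzk : z < k := hz.2.1
    omega
  · rw [sz_odd k c z hz (Nat.not_even_iff_odd.mpr ho), sz_even k c z' hz' he']
    have h1 : prv k c z' ≤ z' - 1 := prv_le k c z'
    have h2 : nxt k c z ≤ k := nxt_le_k k c z
    have hzk : z' < k := hz'.2.1
    omega
  · -- both odd-entering: nxt strictly increases
    rw [sz_odd k c z hz (Nat.not_even_iff_odd.mpr ho),
      sz_odd k c z' hz' (Nat.not_even_iff_odd.mpr ho')]
    have h1 : nxt k c z ≤ z' := nxt_le_of_zm k c z z' hlt hz'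
    have h2 : z' < nxt k c z' := nxt_gt k c z' hz'.2.1
    omega

lemma sig_PP_lt (i j : ℕ) (hk : 0 < k) (hi : i ≤ k) (hj : j ≤ k)
    (hci : c i ≠ 0) (hcj : c j ≠ 0) (hkey : key k c i < key k c j) :
    sig k c i < sig k c j := by
  rw [sig_P_eq k c i hk hi hci, sig_P_eq k c j hk hj hcj]
  have hdi_le : (if i = k then bZ k c (k-1) else -1) ≤ (k:ℤ) := by
    split
    · exact bZ_le_k k c (k-1) (by omega)
    · omega
  have hdj_ge : (-1 : ℤ) ≤ (if j = k then bZ k c (k-1) else -1) := by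
    split
    · have := bZ_ge_one k c (k-1) (by omega); omega
    · omega
  rcases Nat.lt_trichotomy (c i) (c j) with h | h | h
  · -- cross class
    have hcross := TT_cross k c i j hi hj hci h
    have hTT : (TT k c i : ℤ) + (st k c i : ℤ) + 2 ≤ (TT k c j : ℤ) := by
      exact_mod_cast hcross
    have hst' : (k:ℤ) + 1 ≤ (st k c i : ℤ) := by exact_mod_cast st_ge k c i
    omega
  · -- same class
    have hine : i ≠ k := by
      intro hik
      have hjne : j ≠ k := by
        intro hjk
        rw [hik, hjk] at hkey
        exact lt_irrefl _ hkey
      have := key_k_max k c j hj hjne (by rw [hik] at h; omega)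
      rw [hik] at hkey
      omega
    have hTT : TT k c i < TT k c j := TT_lt_same k c i j hi hj h hci hkey
    have hTT' : (TT k c i : ℤ) < (TT k c j : ℤ) := by exact_mod_cast hTT
    rw [if_neg hine]
    omega
  · exact absurd hkey (by have := key_mono_c k c j i hj hi h; omega)


lemma sig_inj (hend : ∀ i, i ≤ k → c i = 0 → 0 < i ∧ i < k)
    (i j : ℕ) (hi : i ≤ k) (hj : j ≤ k) (hne : i ≠ j) : sig k c i ≠ sig k c j := by
  by_cases hci : c i = 0 <;> by_cases hcj : c j = 0
  · have hzi : zm k c i := ⟨(hend i hi hci).1, (hend i hi hci).2, hci⟩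
    have hzj : zm k c j := ⟨(hend j hj hcj).1, (hend j hj hcj).2, hcj⟩
    exact sig_ZZ_ne k c i j hzi hzj hne
  · have hzi : zm k c i := ⟨(hend i hi hci).1, (hend i hi hci).2, hci⟩
    have h1 := (sig_Z_bounds k c i hzi).2
    have h2 := sig_P_ge k c j hj hcj
    omega
  · have hzj : zm k c j := ⟨(hend j hj hcj).1, (hend j hj hcj).2, hcj⟩
    have h1 := (sig_Z_bounds k c j hzj).2
    have h2 := sig_P_ge k c i hi hci
    omega
  · have hk : 0 < k := by
      rcases Nat.eq_zero_or_pos k with rfl | hk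
      · omega
      · exact hk
    have hkey : key k c i ≠ key k c j := fun h => hne (key_inj k c i j hi hj h)
    rcases lt_or_gt_of_ne hkey with h | h
    · exact ne_of_lt (sig_PP_lt k c i j hk hi hj hci hcj h)
    · exact (ne_of_lt (sig_PP_lt k c j i hk hj hi hcj hci h)).symm

lemma sig_gt (hend : ∀ i, i ≤ k → c i = 0 → 0 < i ∧ i < k)
    (i : ℕ) (hi : i ≤ k) : -(k:ℤ) - 1 < sig k c i := by
  by_cases hci : c i = 0
  · have hzi : zm k c i := ⟨(hend i hi hci).1, (hend i hi hci).2, hci⟩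
    have h1 := (sig_Z_bounds k c i hzi).1
    omega
  · have := sig_P_ge k c i hi hci
    omega

lemma sig_ne_leaf (hend : ∀ i, i ≤ k → c i = 0 → 0 < i ∧ i < k)
    (i : ℕ) (hi : i ≤ k) (x : ℕ) (hx : k + 1 ≤ x) : sig k c i ≠ -(x:ℤ) := by
  have h1 := sig_gt k c hend i hi
  have : (k:ℤ) + 1 ≤ (x:ℤ) := by exact_mod_cast hx
  omega


section Graph

open SimpleGraph

variable {V : Type*} [Fintype V] (G : SimpleGraph V) (k : ℕ) (w : Fin (k + 1) → V)

/-- spine vertex by natural index -/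
noncomputable def wn (i : ℕ) : V := w ⟨min i k, by omega⟩

lemma wn_eq (i : ℕ) (hi : i ≤ k) : wn k w i = w ⟨i, by omega⟩ := by
  unfold wn
  congr 1
  exact Fin.ext (by simp [Nat.min_eq_left hi])

lemma wn_inj (hw : Function.Injective w) (i j : ℕ) (hi : i ≤ k) (hj : j ≤ k)
    (h : wn k w i = wn k w j) : i = j := by
  rw [wn_eq k w i hi, wn_eq k w j hj] at h
  have := hw h
  simpa using congrArg Fin.val this

lemma wn_mem_SP (i : ℕ) : wn k w i ∈ Set.range w := ⟨_, rfl⟩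

lemma SP_elim (x : V) (hx : x ∈ Set.range w) : ∃ i, i ≤ k ∧ wn k w i = x := by
  obtain ⟨j, rfl⟩ := hx
  exact ⟨j.val, by omega, by rw [wn_eq k w j.val (by omega)]⟩

lemma adj_wn (hadj : ∀ i j : Fin (k + 1), G.Adj (w i) (w j) ↔
      ((i : ℕ) + 1 = (j : ℕ) ∨ (j : ℕ) + 1 = (i : ℕ)))
    (i j : ℕ) (hi : i ≤ k) (hj : j ≤ k) :
    G.Adj (wn k w i) (wn k w j) ↔ (i + 1 = j ∨ j + 1 = i) := by
  rw [wn_eq k w i hi, wn_eq k w j hj, hadj]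

/-- choice of a neighbor -/
noncomputable def nb (x : V) : V :=
  if h : (G.neighborFinset x).Nonempty then h.choose else x

lemma nb_adj (x : V) (h : 0 < G.degree x) : G.Adj x (nb G x) := by
  rw [← SimpleGraph.card_neighborFinset_eq_degree] at h
  have hne : (G.neighborFinset x).Nonempty := Finset.card_pos.mp h
  rw [nb, dif_pos hne]
  have := hne.choose_spec
  rwa [SimpleGraph.mem_neighborFinset] at this

lemma nb_unique (x : V) (h : G.degree x = 1) (y : V) (hy : G.Adj x y) : y = nb G x := by
  rw [← SimpleGraph.card_neighborFinset_eq_degree] at h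
  have hne : (G.neighborFinset x).Nonempty := Finset.card_pos.mp (by omega)
  have hnb : nb G x ∈ G.neighborFinset x := by
    rw [nb, dif_pos hne]; exact hne.choose_spec
  obtain ⟨a, ha⟩ := Finset.card_eq_one.mp h
  rw [ha, Finset.mem_singleton] at hnb
  have hy' : y ∈ G.neighborFinset x := by rwa [SimpleGraph.mem_neighborFinset]
  rw [ha, Finset.mem_singleton] at hy'
  rw [hy', hnb]

lemma walk_trap (x y : V)
    (hx : ∀ z, G.Adj x z → z = y) (hy : ∀ z, G.Adj y z → z = x)
    (t u : V) (p : G.Walk t u) : (u = x ∨ u = y) → (t = x ∨ t = y) := by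
  induction p with
  | nil => exact id
  | cons h q ih =>
    rename_i a b d
    intro hu
    rcases ih hu with rfl | rfl
    · right; exact hx _ h.symm
    · left; exact hy _ h.symm

/-- the neighbor of a leaf is on the spine -/
lemma nb_mem_SP (htree : G.IsTree)
    (hdeg : ∀ x : V, x ∈ Set.range w ↔ G.degree x ≠ 1)
    (x : V) (hx : x ∉ Set.range w) : nb G x ∈ Set.range w := by
  by_contra hxn
  have hdx : G.degree x = 1 := by
    by_contra h; exact hx ((hdeg x).mpr h)
  have hdn : G.degree (nb G x) = 1 := by
    by_contra h; exact hxn ((hdeg (nb G x)).mpr h)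
  have hadjx : G.Adj x (nb G x) := nb_adj G x (by omega)
  have hx1 : ∀ z, G.Adj x z → z = nb G x := fun z hz => nb_unique G x hdx z hz
  have hy1 : ∀ z, G.Adj (nb G x) z → z = x := by
    intro z hz
    have h1 := nb_unique G (nb G x) hdn z hz
    have h2 := nb_unique G (nb G x) hdn x hadjx.symm
    rw [h1, ← h2]
  have hreach : G.Reachable (wn k w 0) x := htree.isConnected.preconnected _ _
  obtain ⟨p⟩ := hreach
  rcases walk_trap G x (nb G x) hx1 hy1 _ _ p (Or.inl rfl) with h | h
  · exact hx (h ▸ wn_mem_SP k w 0)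
  · exact hxn (h ▸ wn_mem_SP k w 0)

/-- index of a spine vertex -/
noncomputable def sidx (x : V) : ℕ :=
  if h : ∃ i, i ≤ k ∧ wn k w i = x then h.choose else 0

lemma sidx_spec (x : V) (hx : x ∈ Set.range w) :
    sidx k w x ≤ k ∧ wn k w (sidx k w x) = x := by
  have h : ∃ i, i ≤ k ∧ wn k w i = x := SP_elim k w x hx
  rw [sidx, dif_pos h]
  exact h.choose_spec

lemma sidx_wn (hw : Function.Injective w) (i : ℕ) (hi : i ≤ k) :
    sidx k w (wn k w i) = i := by
  have h := sidx_spec k w (wn k w i) (wn_mem_SP k w i)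
  exact wn_inj k w hw _ _ h.1 hi h.2

end Graph


section Graph2

open SimpleGraph

variable {V : Type*} [Fintype V] (G : SimpleGraph V) (k : ℕ) (w : Fin (k + 1) → V)

/-- leaves attached to spine vertex i -/
noncomputable def Lv (i : ℕ) : Finset V :=
  Finset.univ.filter (fun x => x ∉ Set.range w ∧ nb G x = wn k w i)

noncomputable def cc (i : ℕ) : ℕ := (Lv G k w i).card

noncomputable def ordV (x : V) : ℕ := ((Fintype.equivFin V) x : ℕ)

lemma ordV_inj : Function.Injective (ordV (V := V)) := by
  intro x y h
  have := Fin.ext (a := (Fintype.equivFin V) x) (b := (Fintype.equivFin V) y) h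
  exact (Fintype.equivFin V).injective this

-- generic rank machinery
lemma rank_lt {α : Type*} (ord : α → ℕ) (s : Finset α) (x : α) (hx : x ∈ s) :
    (s.filter (fun y => ord y < ord x)).card < s.card := by
  apply Finset.card_lt_card
  constructor
  · exact Finset.filter_subset _ _
  · intro hsub
    have := hsub hx
    simp only [Finset.mem_filter] at this
    omega

lemma rank_strict {α : Type*} (ord : α → ℕ) (s : Finset α) (x y : α)
    (hx : x ∈ s) (h : ord x < ord y) :
    (s.filter (fun q => ord q < ord x)).card < (s.filter (fun q => ord q < ord y)).card := by
  apply Finset.card_lt_card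
  constructor
  · intro q hq
    simp only [Finset.mem_filter] at hq ⊢
    exact ⟨hq.1, by omega⟩
  · intro hsub
    have hxy : x ∈ s.filter (fun q => ord q < ord y) := by
      simp only [Finset.mem_filter]; exact ⟨hx, h⟩
    have := hsub hxy
    simp only [Finset.mem_filter] at this
    omega

lemma rank_injOn {α : Type*} (ord : α → ℕ) (hord : Function.Injective ord) (s : Finset α) :
    Set.InjOn (fun x => (s.filter (fun y => ord y < ord x)).card) s := by
  intro x hx y hy h
  simp only at h
  rcases Nat.lt_trichotomy (ord x) (ord y) with hc | hc | hc
  · have := rank_strict ord s x y hx hc; omega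
  · exact hord hc
  · have := rank_strict ord s y x hy hc; omega

lemma rank_image {α : Type*} (ord : α → ℕ) (hord : Function.Injective ord) (s : Finset α) :
    s.image (fun x => (s.filter (fun y => ord y < ord x)).card) = Finset.range s.card := by
  apply Finset.eq_of_subset_of_card_le
  · intro r hr
    simp only [Finset.mem_image] at hr
    obtain ⟨x, hx, rfl⟩ := hr
    simp only [Finset.mem_range]
    exact rank_lt ord s x hx
  · rw [Finset.card_range, Finset.card_image_of_injOn (rank_injOn ord hord s)]

lemma rank_sum {α : Type*} (ord : α → ℕ) (hord : Function.Injective ord) (s : Finset α)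
    (f : ℕ → ℕ) :
    ∑ x ∈ s, f ((s.filter (fun y => ord y < ord x)).card) = ∑ r ∈ Finset.range s.card, f r := by
  rw [← rank_image ord hord s, Finset.sum_image (fun x hx y hy h => rank_injOn ord hord s hx hy h)]

/-- rank of a leaf among the leaves of its spine vertex -/
noncomputable def rk (x : V) : ℕ :=
  ((Lv G k w (sidx k w (nb G x))).filter (fun y => ordV y < ordV x)).card

/-- leaf labels -/
noncomputable def lab (x : V) : ℕ :=
  st k (cc G k w) (sidx k w (nb G x)) + rk G k w x

lemma mem_Lv (x : V) (i : ℕ) :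
    x ∈ Lv G k w i ↔ (x ∉ Set.range w ∧ nb G x = wn k w i) := by
  unfold Lv
  simp

lemma Lv_sidx (hw : Function.Injective w) (x : V) (i : ℕ) (hi : i ≤ k)
    (hx : x ∈ Lv G k w i) : sidx k w (nb G x) = i := by
  rw [mem_Lv] at hx
  rw [hx.2, sidx_wn k w hw i hi]

lemma lab_eq (hw : Function.Injective w) (x : V) (i : ℕ) (hi : i ≤ k)
    (hx : x ∈ Lv G k w i) :
    lab G k w x = st k (cc G k w) i
      + ((Lv G k w i).filter (fun y => ordV y < ordV x)).card := by
  unfold lab rk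
  rw [Lv_sidx G k w hw x i hi hx]

/-- every leaf belongs to some Lv i -/
lemma leaf_mem_Lv (htree : G.IsTree)
    (hdeg : ∀ x : V, x ∈ Set.range w ↔ G.degree x ≠ 1)
    (x : V) (hx : x ∉ Set.range w) :
    ∃ i, i ≤ k ∧ x ∈ Lv G k w i := by
  have hnb := nb_mem_SP G k w htree hdeg x hx
  obtain ⟨i, hi, hwn⟩ := SP_elim k w (nb G x) hnb
  exact ⟨i, hi, by rw [mem_Lv]; exact ⟨hx, hwn.symm⟩⟩

/-- a non-spine neighbor of a spine vertex is an attached leaf -/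
lemma nbr_of_wn (hdeg : ∀ x : V, x ∈ Set.range w ↔ G.degree x ≠ 1)
    (i : ℕ) (y : V) (hy : G.Adj (wn k w i) y) (hyn : y ∉ Set.range w) :
    y ∈ Lv G k w i := by
  have hdy : G.degree y = 1 := by
    by_contra h; exact hyn ((hdeg y).mpr h)
  rw [mem_Lv]
  exact ⟨hyn, (nb_unique G y hdy (wn k w i) hy.symm).symm⟩

lemma cc_end (htree : G.IsTree) (hw : Function.Injective w)
    (hdeg : ∀ x : V, x ∈ Set.range w ↔ G.degree x ≠ 1)
    (hadj : ∀ i j : Fin (k + 1), G.Adj (w i) (w j) ↔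
      ((i : ℕ) + 1 = (j : ℕ) ∨ (j : ℕ) + 1 = (i : ℕ)))
    (hn : 3 ≤ Fintype.card V) :
    ∀ i, i ≤ k → cc G k w i = 0 → 0 < i ∧ i < k := by
  intro i hi hci
  have hLv : Lv G k w i = ∅ := Finset.card_eq_zero.mp hci
  rcases Nat.eq_zero_or_pos k with rfl | hk
  · -- star case : k = 0 must have a leaf
    exfalso
    have hex : ∃ x : V, x ∉ Set.range w := by
      by_contra h
      push_neg at h
      have hsurj : Function.Surjective w := by
        intro x; exact h x
      have := Fintype.card_le_of_surjective w hsurj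
      simp at this
      omega
    obtain ⟨x, hx⟩ := hex
    obtain ⟨j, hj, hxj⟩ := leaf_mem_Lv G 0 w htree hdeg x hx
    have : j = 0 := by omega
    subst this
    have : i = 0 := by omega
    subst this
    rw [hLv] at hxj
    exact absurd hxj (Finset.notMem_empty x)
  · constructor
    · -- i ≠ 0
      rcases Nat.eq_zero_or_pos i with rfl | h0
      · exfalso
        have hsub : G.neighborFinset (wn k w 0) ⊆ {wn k w 1} := by
          intro y hy
          rw [SimpleGraph.mem_neighborFinset] at hy
          by_cases hyn : y ∈ Set.range w
          · obtain ⟨j, hj, rfl⟩ := SP_elim k w y hyn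
            have := (adj_wn G k w hadj 0 j (by omega) hj).mp hy
            have hj1 : j = 1 := by omega
            subst hj1
            exact Finset.mem_singleton_self _
          · have := nbr_of_wn G k w hdeg 0 y hy hyn
            rw [hLv] at this
            exact absurd this (Finset.notMem_empty y)
        have hmem : wn k w 1 ∈ G.neighborFinset (wn k w 0) := by
          rw [SimpleGraph.mem_neighborFinset]
          exact (adj_wn G k w hadj 0 1 (by omega) (by omega)).mpr (by omega)
        have hcard : G.degree (wn k w 0) = 1 := by
          rw [← SimpleGraph.card_neighborFinset_eq_degree]
          have h1 : G.neighborFinset (wn k w 0) = {wn k w 1} :=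
            Finset.Subset.antisymm hsub (Finset.singleton_subset_iff.mpr hmem)
          rw [h1, Finset.card_singleton]
        exact ((hdeg (wn k w 0)).mp (wn_mem_SP k w 0)) hcard
      · exact h0
    · -- i ≠ k
      rcases eq_or_ne i k with hik | hik
      · exfalso
        rw [hik] at hLv
        have hsub : G.neighborFinset (wn k w k) ⊆ {wn k w (k-1)} := by
          intro y hy
          rw [SimpleGraph.mem_neighborFinset] at hy
          by_cases hyn : y ∈ Set.range w
          · obtain ⟨j, hj, rfl⟩ := SP_elim k w y hyn
            have := (adj_wn G k w hadj k j (by omega) hj).mp hy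
            have hj1 : j = k - 1 := by omega
            subst hj1
            exact Finset.mem_singleton_self _
          · have := nbr_of_wn G k w hdeg k y hy hyn
            rw [hLv] at this
            exact absurd this (Finset.notMem_empty y)
        have hmem : wn k w (k-1) ∈ G.neighborFinset (wn k w k) := by
          rw [SimpleGraph.mem_neighborFinset]
          exact (adj_wn G k w hadj k (k-1) (by omega) (by omega)).mpr (by omega)
        have hcard : G.degree (wn k w k) = 1 := by
          rw [← SimpleGraph.card_neighborFinset_eq_degree]
          have h1 : G.neighborFinset (wn k w k) = {wn k w (k-1)} :=
            Finset.Subset.antisymm hsub (Finset.singleton_subset_iff.mpr hmem)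
          rw [h1, Finset.card_singleton]
        exact ((hdeg (wn k w k)).mp (wn_mem_SP k w k)) hcard
      · omega

end Graph2


section Graph3

open SimpleGraph

variable {V : Type*} [Fintype V] (G : SimpleGraph V) (k : ℕ) (w : Fin (k + 1) → V)

lemma spine_edge_mem (hadj : ∀ i j : Fin (k + 1), G.Adj (w i) (w j) ↔
      ((i : ℕ) + 1 = (j : ℕ) ∨ (j : ℕ) + 1 = (i : ℕ)))
    (i : ℕ) (hi : i < k) : s(wn k w i, wn k w (i+1)) ∈ G.edgeSet := by
  rw [SimpleGraph.mem_edgeSet]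
  exact (adj_wn G k w hadj i (i+1) (by omega) (by omega)).mpr (by omega)

lemma leaf_edge_mem (hdeg : ∀ x : V, x ∈ Set.range w ↔ G.degree x ≠ 1)
    (x : V) (hx : x ∉ Set.range w) : s(x, nb G x) ∈ G.edgeSet := by
  rw [SimpleGraph.mem_edgeSet]
  have hdx : G.degree x = 1 := by
    by_contra h; exact hx ((hdeg x).mpr h)
  exact nb_adj G x (by omega)

lemma spine_rep_inj (hw : Function.Injective w) (i j : ℕ) (hi : i < k) (hj : j < k)
    (h : s(wn k w i, wn k w (i+1)) = s(wn k w j, wn k w (j+1))) : i = j := by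
  rw [Sym2.eq_iff] at h
  rcases h with ⟨h1, _⟩ | ⟨h1, h2⟩
  · exact wn_inj k w hw i j (by omega) (by omega) h1
  · have e1 := wn_inj k w hw i (j+1) (by omega) (by omega) h1
    have e2 := wn_inj k w hw (i+1) j (by omega) (by omega) h2
    omega

lemma rep_disjoint (i : ℕ) (hi : i < k) (x : V) (hx : x ∉ Set.range w) :
    s(wn k w i, wn k w (i+1)) ≠ s(x, nb G x) := by
  intro h
  rw [Sym2.eq_iff] at h
  rcases h with ⟨h1, _⟩ | ⟨_, h2⟩
  · exact hx (h1 ▸ wn_mem_SP k w i)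
  · exact hx (h2 ▸ wn_mem_SP k w (i+1))

lemma leaf_rep_inj (htree : G.IsTree)
    (hdeg : ∀ x : V, x ∈ Set.range w ↔ G.degree x ≠ 1)
    (x y : V) (hx : x ∉ Set.range w) (hy : y ∉ Set.range w)
    (h : s(x, nb G x) = s(y, nb G y)) : x = y := by
  rw [Sym2.eq_iff] at h
  rcases h with ⟨h1, _⟩ | ⟨h1, h2⟩
  · exact h1
  · exfalso
    apply hy
    rw [← h2]
    exact nb_mem_SP G k w htree hdeg x hx

lemma edge_class (htree : G.IsTree)
    (hdeg : ∀ x : V, x ∈ Set.range w ↔ G.degree x ≠ 1)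
    (hadj : ∀ i j : Fin (k + 1), G.Adj (w i) (w j) ↔
      ((i : ℕ) + 1 = (j : ℕ) ∨ (j : ℕ) + 1 = (i : ℕ)))
    (e : Sym2 V) (he : e ∈ G.edgeSet) :
    (∃ i, i < k ∧ e = s(wn k w i, wn k w (i+1))) ∨
    (∃ x, x ∉ Set.range w ∧ e = s(x, nb G x)) := by
  induction e with
  | _ a b =>
    rw [SimpleGraph.mem_edgeSet] at he
    by_cases ha : a ∈ Set.range w
    · by_cases hb : b ∈ Set.range w
      · left
        obtain ⟨i, hi, rfl⟩ := SP_elim k w a ha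
        obtain ⟨j, hj, rfl⟩ := SP_elim k w b hb
        rcases (adj_wn G k w hadj i j hi hj).mp he with h | h
        · exact ⟨i, by omega, by rw [h]⟩
        · exact ⟨j, by omega, by rw [h, Sym2.eq_swap]⟩
      · right
        have hdb : G.degree b = 1 := by
          by_contra h; exact hb ((hdeg b).mpr h)
        have : a = nb G b := nb_unique G b hdb a he.symm
        exact ⟨b, hb, by rw [this, Sym2.eq_swap]⟩
    · right
      have hda : G.degree a = 1 := by
        by_contra h; exact ha ((hdeg a).mpr h)
      have : b = nb G a := nb_unique G a hda b he
      exact ⟨a, ha, by rw [this]⟩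

noncomputable def phiF (e : Sym2 V) : ℕ :=
  if h : ∃ i, i < k ∧ e = s(wn k w i, wn k w (i+1)) then (bZ k (cc G k w) h.choose).toNat
  else if h2 : ∃ x, x ∉ Set.range w ∧ e = s(x, nb G x) then lab G k w h2.choose
  else 0

noncomputable def tailF (v0 : V) (e : Sym2 V) : V :=
  if h : ∃ i, i < k ∧ e = s(wn k w i, wn k w (i+1)) then wn k w h.choose
  else if h2 : ∃ x, x ∉ Set.range w ∧ e = s(x, nb G x) then h2.choose
  else v0

noncomputable def headF (v0 : V) (e : Sym2 V) : V :=
  if h : ∃ i, i < k ∧ e = s(wn k w i, wn k w (i+1)) then wn k w (h.choose + 1)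
  else if h2 : ∃ x, x ∉ Set.range w ∧ e = s(x, nb G x) then nb G h2.choose
  else v0

lemma spine_exists_unique (hw : Function.Injective w) (i : ℕ) (hi : i < k) :
    ∀ (h : ∃ j, j < k ∧ s(wn k w i, wn k w (i+1)) = s(wn k w j, wn k w (j+1))),
      h.choose = i := by
  intro h
  obtain ⟨hj, heq⟩ := h.choose_spec
  exact (spine_rep_inj k w hw _ i hj hi heq.symm)

lemma phi_spine (hw : Function.Injective w) (i : ℕ) (hi : i < k) :
    phiF G k w (s(wn k w i, wn k w (i+1))) = (bZ k (cc G k w) i).toNat := by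
  have h : ∃ j, j < k ∧ s(wn k w i, wn k w (i+1)) = s(wn k w j, wn k w (j+1)) :=
    ⟨i, hi, rfl⟩
  rw [phiF, dif_pos h, spine_exists_unique k w hw i hi h]

lemma tail_spine (hw : Function.Injective w) (v0 : V) (i : ℕ) (hi : i < k) :
    tailF G k w v0 (s(wn k w i, wn k w (i+1))) = wn k w i := by
  have h : ∃ j, j < k ∧ s(wn k w i, wn k w (i+1)) = s(wn k w j, wn k w (j+1)) :=
    ⟨i, hi, rfl⟩
  rw [tailF, dif_pos h, spine_exists_unique k w hw i hi h]

lemma head_spine (hw : Function.Injective w) (v0 : V) (i : ℕ) (hi : i < k) :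
    headF G k w v0 (s(wn k w i, wn k w (i+1))) = wn k w (i+1) := by
  have h : ∃ j, j < k ∧ s(wn k w i, wn k w (i+1)) = s(wn k w j, wn k w (j+1)) :=
    ⟨i, hi, rfl⟩
  rw [headF, dif_pos h, spine_exists_unique k w hw i hi h]

lemma leaf_no_spine_rep (x : V) (hx : x ∉ Set.range w) :
    ¬ ∃ i, i < k ∧ s(x, nb G x) = s(wn k w i, wn k w (i+1)) := by
  rintro ⟨i, hi, heq⟩
  exact rep_disjoint G k w i hi x hx heq.symm

lemma leaf_exists_unique (htree : G.IsTree)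
    (hdeg : ∀ x : V, x ∈ Set.range w ↔ G.degree x ≠ 1)
    (x : V) (hx : x ∉ Set.range w) :
    ∀ (h : ∃ y, y ∉ Set.range w ∧ s(x, nb G x) = s(y, nb G y)), h.choose = x := by
  intro h
  obtain ⟨hy, heq⟩ := h.choose_spec
  exact leaf_rep_inj G k w htree hdeg _ x hy hx heq.symm

lemma phi_leaf (htree : G.IsTree)
    (hdeg : ∀ x : V, x ∈ Set.range w ↔ G.degree x ≠ 1)
    (x : V) (hx : x ∉ Set.range w) :
    phiF G k w (s(x, nb G x)) = lab G k w x := by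
  have h2 : ∃ y, y ∉ Set.range w ∧ s(x, nb G x) = s(y, nb G y) := ⟨x, hx, rfl⟩
  rw [phiF, dif_neg (leaf_no_spine_rep G k w x hx), dif_pos h2,
    leaf_exists_unique G k w htree hdeg x hx h2]

lemma tail_leaf (htree : G.IsTree)
    (hdeg : ∀ x : V, x ∈ Set.range w ↔ G.degree x ≠ 1)
    (v0 : V) (x : V) (hx : x ∉ Set.range w) :
    tailF G k w v0 (s(x, nb G x)) = x := by
  have h2 : ∃ y, y ∉ Set.range w ∧ s(x, nb G x) = s(y, nb G y) := ⟨x, hx, rfl⟩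
  rw [tailF, dif_neg (leaf_no_spine_rep G k w x hx), dif_pos h2,
    leaf_exists_unique G k w htree hdeg x hx h2]

lemma head_leaf (htree : G.IsTree)
    (hdeg : ∀ x : V, x ∈ Set.range w ↔ G.degree x ≠ 1)
    (v0 : V) (x : V) (hx : x ∉ Set.range w) :
    headF G k w v0 (s(x, nb G x)) = nb G x := by
  have h2 : ∃ y, y ∉ Set.range w ∧ s(x, nb G x) = s(y, nb G y) := ⟨x, hx, rfl⟩
  rw [headF, dif_neg (leaf_no_spine_rep G k w x hx), dif_pos h2,
    leaf_exists_unique G k w htree hdeg x hx h2]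

end Graph3


section Graph4

open SimpleGraph

variable {V : Type*} [Fintype V] (G : SimpleGraph V) (k : ℕ) (w : Fin (k + 1) → V)

noncomputable def LL : ℕ := ∑ i ∈ Finset.range (k+1), cc G k w i

lemma card_leaves (htree : G.IsTree) (hw : Function.Injective w)
    (hdeg : ∀ x : V, x ∈ Set.range w ↔ G.degree x ≠ 1) :
    (Finset.univ.filter (fun x : V => x ∉ Set.range w)).card = LL G k w := by
  unfold LL
  rw [Finset.card_eq_sum_card_fiberwise
    (f := fun x => sidx k w (nb G x)) (t := Finset.range (k+1))
    (fun x hx => by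
      simp only [Finset.mem_coe, Finset.mem_filter, Finset.mem_univ, true_and] at hx
      simp only [Finset.mem_coe, Finset.mem_range]
      have := (sidx_spec k w (nb G x) (nb_mem_SP G k w htree hdeg x hx)).1
      omega)]
  apply Finset.sum_congr rfl
  intro i hi
  simp only [Finset.mem_range] at hi
  congr 1
  ext x
  simp only [Finset.mem_filter, Finset.mem_univ, true_and, mem_Lv]
  constructor
  · rintro ⟨hx, hsx⟩
    refine ⟨hx, ?_⟩
    have := (sidx_spec k w (nb G x) (nb_mem_SP G k w htree hdeg x hx)).2
    rw [← this, hsx]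
  · rintro ⟨hx, hnx⟩
    exact ⟨hx, by rw [hnx, sidx_wn k w hw i (by omega)]⟩

noncomputable def spineE : Finset (Sym2 V) :=
  (Finset.range k).image (fun i => s(wn k w i, wn k w (i+1)))

noncomputable def leafE : Finset (Sym2 V) :=
  (Finset.univ.filter (fun x : V => x ∉ Set.range w)).image (fun x => s(x, nb G x))

lemma edgeFinset_eq (htree : G.IsTree)
    (hdeg : ∀ x : V, x ∈ Set.range w ↔ G.degree x ≠ 1)
    (hadj : ∀ i j : Fin (k + 1), G.Adj (w i) (w j) ↔
      ((i : ℕ) + 1 = (j : ℕ) ∨ (j : ℕ) + 1 = (i : ℕ))) :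
    G.edgeFinset = spineE k w ∪ leafE G k w := by
  ext e
  simp only [SimpleGraph.mem_edgeFinset, Finset.mem_union]
  constructor
  · intro he
    rcases edge_class G k w htree hdeg hadj e he with ⟨i, hi, rfl⟩ | ⟨x, hx, rfl⟩
    · left; unfold spineE
      exact Finset.mem_image.mpr ⟨i, Finset.mem_range.mpr hi, rfl⟩
    · right; unfold leafE
      exact Finset.mem_image.mpr ⟨x, Finset.mem_filter.mpr ⟨Finset.mem_univ x, hx⟩, rfl⟩
  · intro he
    rcases he with he | he
    · unfold spineE at he
      obtain ⟨i, hi, rfl⟩ := Finset.mem_image.mp he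
      exact spine_edge_mem G k w hadj i (Finset.mem_range.mp hi)
    · unfold leafE at he
      obtain ⟨x, hx, rfl⟩ := Finset.mem_image.mp he
      simp only [Finset.mem_filter, Finset.mem_univ, true_and] at hx
      exact leaf_edge_mem G k w hdeg x hx

lemma card_spineE (hw : Function.Injective w) : (spineE k w).card = k := by
  unfold spineE
  rw [Finset.card_image_of_injOn, Finset.card_range]
  intro i hi j hj h
  simp only [Finset.coe_range, Set.mem_Iio] at hi hj
  exact spine_rep_inj k w hw i j hi hj h

lemma card_leafE (htree : G.IsTree) (hw : Function.Injective w)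
    (hdeg : ∀ x : V, x ∈ Set.range w ↔ G.degree x ≠ 1) :
    (leafE G k w).card = LL G k w := by
  unfold leafE
  rw [Finset.card_image_of_injOn, card_leaves G k w htree hw hdeg]
  intro x hx y hy h
  simp only [Finset.coe_filter, Finset.mem_univ, true_and, Set.mem_setOf_eq] at hx hy
  exact leaf_rep_inj G k w htree hdeg x y hx hy h

lemma disj_spine_leaf : Disjoint (spineE k w) (leafE G k w) := by
  rw [Finset.disjoint_left]
  intro e he1 he2
  unfold spineE at he1
  unfold leafE at he2
  obtain ⟨i, hi, rfl⟩ := Finset.mem_image.mp he1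
  obtain ⟨x, hx, hx2⟩ := Finset.mem_image.mp he2
  simp only [Finset.mem_filter, Finset.mem_univ, true_and] at hx
  exact rep_disjoint G k w i (Finset.mem_range.mp hi) x hx hx2.symm

lemma card_edges (htree : G.IsTree) (hw : Function.Injective w)
    (hdeg : ∀ x : V, x ∈ Set.range w ↔ G.degree x ≠ 1)
    (hadj : ∀ i j : Fin (k + 1), G.Adj (w i) (w j) ↔
      ((i : ℕ) + 1 = (j : ℕ) ∨ (j : ℕ) + 1 = (i : ℕ))) :
    G.edgeFinset.card = k + LL G k w := by
  rw [edgeFinset_eq G k w htree hdeg hadj,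
    Finset.card_union_of_disjoint (disj_spine_leaf G k w),
    card_spineE k w hw, card_leafE G k w htree hw hdeg]

lemma lab_bounds (htree : G.IsTree) (hw : Function.Injective w)
    (hdeg : ∀ x : V, x ∈ Set.range w ↔ G.degree x ≠ 1)
    (x : V) (hx : x ∉ Set.range w) :
    k + 1 ≤ lab G k w x ∧ lab G k w x ≤ k + LL G k w := by
  obtain ⟨i, hi, hxi⟩ := leaf_mem_Lv G k w htree hdeg x hx
  rw [lab_eq G k w hw x i hi hxi]
  have h1 := st_ge k (cc G k w) i
  have h2 := st_le k (cc G k w) i (by omega)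
  have h3 : ((Lv G k w i).filter (fun y => ordV y < ordV x)).card < cc G k w i :=
    rank_lt ordV (Lv G k w i) x hxi
  unfold LL
  constructor
  · omega
  · unfold st at h2 ⊢
    omega

lemma lab_injective (htree : G.IsTree) (hw : Function.Injective w)
    (hdeg : ∀ x : V, x ∈ Set.range w ↔ G.degree x ≠ 1)
    (x y : V) (hx : x ∉ Set.range w) (hy : y ∉ Set.range w) (hne : x ≠ y) :
    lab G k w x ≠ lab G k w y := by
  obtain ⟨i, hi, hxi⟩ := leaf_mem_Lv G k w htree hdeg x hx
  obtain ⟨j, hj, hyj⟩ := leaf_mem_Lv G k w htree hdeg y hy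
  rw [lab_eq G k w hw x i hi hxi, lab_eq G k w hw y j hj hyj]
  rcases eq_or_ne i j with rfl | hij
  · intro h
    have h2 : ((Lv G k w i).filter (fun q => ordV q < ordV x)).card
        = ((Lv G k w i).filter (fun q => ordV q < ordV y)).card := by omega
    exact hne (rank_injOn ordV ordV_inj (Lv G k w i) hxi hyj h2)
  · exact label_inj k (cc G k w) i j _ _ hi hj hij
      (rank_lt ordV (Lv G k w i) x hxi) (rank_lt ordV (Lv G k w j) y hyj)

lemma bN_cast (i : ℕ) (hi : i < k) :
    (((bZ k (cc G k w) i).toNat : ℤ)) = bZ k (cc G k w) i :=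
  Int.toNat_of_nonneg (by have := bZ_ge_one k (cc G k w) i hi; omega)

-- sums at a leaf vertex
lemma filter_head_leaf (htree : G.IsTree) (hw : Function.Injective w)
    (hdeg : ∀ x : V, x ∈ Set.range w ↔ G.degree x ≠ 1)
    (hadj : ∀ i j : Fin (k + 1), G.Adj (w i) (w j) ↔
      ((i : ℕ) + 1 = (j : ℕ) ∨ (j : ℕ) + 1 = (i : ℕ)))
    (v0 : V) (x : V) (hx : x ∉ Set.range w) :
    G.edgeFinset.filter (fun e => headF G k w v0 e = x) = ∅ := by
  rw [Finset.filter_eq_empty_iff]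
  intro e he
  rw [SimpleGraph.mem_edgeFinset] at he
  rcases edge_class G k w htree hdeg hadj e he with ⟨i, hi, rfl⟩ | ⟨y, hy, rfl⟩
  · rw [head_spine G k w hw v0 i hi]
    intro h
    exact hx (h ▸ wn_mem_SP k w (i+1))
  · rw [head_leaf G k w htree hdeg v0 y hy]
    intro h
    exact hx (h ▸ nb_mem_SP G k w htree hdeg y hy)

lemma filter_tail_leaf (htree : G.IsTree) (hw : Function.Injective w)
    (hdeg : ∀ x : V, x ∈ Set.range w ↔ G.degree x ≠ 1)
    (hadj : ∀ i j : Fin (k + 1), G.Adj (w i) (w j) ↔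
      ((i : ℕ) + 1 = (j : ℕ) ∨ (j : ℕ) + 1 = (i : ℕ)))
    (v0 : V) (x : V) (hx : x ∉ Set.range w) :
    G.edgeFinset.filter (fun e => tailF G k w v0 e = x) = {s(x, nb G x)} := by
  ext e
  simp only [Finset.mem_filter, Finset.mem_singleton, SimpleGraph.mem_edgeFinset]
  constructor
  · rintro ⟨he, ht⟩
    rcases edge_class G k w htree hdeg hadj e he with ⟨i, hi, rfl⟩ | ⟨y, hy, rfl⟩
    · rw [tail_spine G k w hw v0 i hi] at ht
      exact absurd (ht ▸ wn_mem_SP k w i) hx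
    · rw [tail_leaf G k w htree hdeg v0 y hy] at ht
      rw [ht]
  · rintro rfl
    exact ⟨leaf_edge_mem G k w hdeg x hx,
      tail_leaf G k w htree hdeg v0 x hx⟩

-- sums at a spine vertex
lemma filter_tail_spine (htree : G.IsTree) (hw : Function.Injective w)
    (hdeg : ∀ x : V, x ∈ Set.range w ↔ G.degree x ≠ 1)
    (hadj : ∀ i j : Fin (k + 1), G.Adj (w i) (w j) ↔
      ((i : ℕ) + 1 = (j : ℕ) ∨ (j : ℕ) + 1 = (i : ℕ)))
    (v0 : V) (i : ℕ) (hi : i ≤ k) :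
    G.edgeFinset.filter (fun e => tailF G k w v0 e = wn k w i)
      = if i < k then {s(wn k w i, wn k w (i+1))} else ∅ := by
  ext e
  simp only [Finset.mem_filter, SimpleGraph.mem_edgeFinset]
  constructor
  · rintro ⟨he, ht⟩
    rcases edge_class G k w htree hdeg hadj e he with ⟨j, hj, rfl⟩ | ⟨y, hy, rfl⟩
    · rw [tail_spine G k w hw v0 j hj] at ht
      have : j = i := wn_inj k w hw j i (by omega) hi ht
      subst this
      rw [if_pos hj]
      exact Finset.mem_singleton_self _
    · rw [tail_leaf G k w htree hdeg v0 y hy] at ht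
      exact absurd (ht ▸ wn_mem_SP k w i) (ht ▸ hy)
  · intro he
    split at he
    · next hik =>
      rw [Finset.mem_singleton] at he
      subst he
      exact ⟨spine_edge_mem G k w hadj i hik, tail_spine G k w hw v0 i hik⟩
    · exact absurd he (Finset.notMem_empty e)

lemma filter_head_spine (htree : G.IsTree) (hw : Function.Injective w)
    (hdeg : ∀ x : V, x ∈ Set.range w ↔ G.degree x ≠ 1)
    (hadj : ∀ i j : Fin (k + 1), G.Adj (w i) (w j) ↔
      ((i : ℕ) + 1 = (j : ℕ) ∨ (j : ℕ) + 1 = (i : ℕ)))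
    (v0 : V) (i : ℕ) (hi : i ≤ k) :
    G.edgeFinset.filter (fun e => headF G k w v0 e = wn k w i)
      = ((Lv G k w i).image (fun x => s(x, nb G x)))
        ∪ (if 0 < i then {s(wn k w (i-1), wn k w i)} else ∅) := by
  ext e
  simp only [Finset.mem_filter, SimpleGraph.mem_edgeFinset, Finset.mem_union,
    Finset.mem_image]
  constructor
  · rintro ⟨he, ht⟩
    rcases edge_class G k w htree hdeg hadj e he with ⟨j, hj, rfl⟩ | ⟨y, hy, rfl⟩
    · rw [head_spine G k w hw v0 j hj] at ht
      have hji : j + 1 = i := wn_inj k w hw (j+1) i (by omega) hi ht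
      right
      rw [if_pos (by omega)]
      have hj' : j = i - 1 := by omega
      subst hj'
      rw [Finset.mem_singleton]
      have hii : i - 1 + 1 = i := by omega
      rw [hii]
    · rw [head_leaf G k w htree hdeg v0 y hy] at ht
      left
      exact ⟨y, (mem_Lv G k w y i).mpr ⟨hy, ht⟩, rfl⟩
  · intro he
    rcases he with ⟨y, hy, rfl⟩ | he
    · rw [mem_Lv] at hy
      refine ⟨leaf_edge_mem G k w hdeg y hy.1, ?_⟩
      rw [head_leaf G k w htree hdeg v0 y hy.1, hy.2]
    · split at he
      · next h0 =>
        rw [Finset.mem_singleton] at he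
        subst he
        have hik : i - 1 < k := by omega
        have hi1 : i - 1 + 1 = i := by omega
        refine ⟨?_, ?_⟩
        · have := spine_edge_mem G k w hadj (i-1) hik
          rwa [hi1] at this
        · have := head_spine G k w hw v0 (i-1) hik
          rw [hi1] at this
          exact this
      · exact absurd he (Finset.notMem_empty e)

lemma sum_leaf_edges (htree : G.IsTree) (hw : Function.Injective w)
    (hdeg : ∀ x : V, x ∈ Set.range w ↔ G.degree x ≠ 1)
    (i : ℕ) (hi : i ≤ k) :
    ∑ e ∈ (Lv G k w i).image (fun x => s(x, nb G x)), (phiF G k w e : ℤ)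
      = (TT k (cc G k w) i : ℤ) := by
  rw [Finset.sum_image (fun x hx y hy h =>
    leaf_rep_inj G k w htree hdeg x y ((mem_Lv G k w x i).mp hx).1
      ((mem_Lv G k w y i).mp hy).1 h)]
  have h1 : ∀ x ∈ Lv G k w i, (phiF G k w (s(x, nb G x)) : ℤ)
      = ((st k (cc G k w) i + ((Lv G k w i).filter (fun y => ordV y < ordV x)).card : ℕ) : ℤ) := by
    intro x hx
    rw [phi_leaf G k w htree hdeg x ((mem_Lv G k w x i).mp hx).1,
      lab_eq G k w hw x i hi hx]
  rw [Finset.sum_congr rfl h1]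
  have h2 := rank_sum ordV ordV_inj (Lv G k w i)
    (fun r => st k (cc G k w) i + r)
  have h3 : (∑ x ∈ Lv G k w i,
      (st k (cc G k w) i + ((Lv G k w i).filter (fun y => ordV y < ordV x)).card) : ℕ)
      = TT k (cc G k w) i := by
    rw [h2]; rfl
  exact_mod_cast congrArg (Nat.cast : ℕ → ℤ) h3

end Graph4


section Graph5

open SimpleGraph

variable {V : Type*} [Fintype V] (G : SimpleGraph V) (k : ℕ) (w : Fin (k + 1) → V)

lemma sum_head_spine_eq (htree : G.IsTree) (hw : Function.Injective w)
    (hdeg : ∀ x : V, x ∈ Set.range w ↔ G.degree x ≠ 1)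
    (hadj : ∀ i j : Fin (k + 1), G.Adj (w i) (w j) ↔
      ((i : ℕ) + 1 = (j : ℕ) ∨ (j : ℕ) + 1 = (i : ℕ)))
    (v0 : V) (i : ℕ) (hi : i ≤ k) :
    ∑ e ∈ G.edgeFinset.filter (fun e => headF G k w v0 e = wn k w i), (phiF G k w e : ℤ)
      = (TT k (cc G k w) i : ℤ) + (if 1 ≤ i then bZ k (cc G k w) (i-1) else 0) := by
  rw [filter_head_spine G k w htree hw hdeg hadj v0 i hi]
  rcases Nat.eq_zero_or_pos i with rfl | h0
  · rw [if_neg (by omega), if_neg (by omega), Finset.union_empty,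
      sum_leaf_edges G k w htree hw hdeg 0 (by omega)]
    ring
  · rw [if_pos h0, if_pos (by omega : 1 ≤ i)]
    have hi1 : i - 1 + 1 = i := by omega
    have hik : i - 1 < k := by omega
    have hdisj : Disjoint ((Lv G k w i).image (fun x => s(x, nb G x)))
        ({s(wn k w (i-1), wn k w i)} : Finset (Sym2 V)) := by
      rw [Finset.disjoint_right]
      intro e he1 he2
      rw [Finset.mem_singleton] at he1
      obtain ⟨y, hy, hy2⟩ := Finset.mem_image.mp he2
      rw [mem_Lv] at hy
      subst he1
      apply rep_disjoint G k w (i-1) hik y hy.1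
      rw [hi1]
      exact hy2.symm
    rw [Finset.sum_union hdisj, sum_leaf_edges G k w htree hw hdeg i hi,
      Finset.sum_singleton]
    have hphi : phiF G k w (s(wn k w (i-1), wn k w i))
        = (bZ k (cc G k w) (i-1)).toNat := by
      have := phi_spine G k w hw (i-1) hik
      rwa [hi1] at this
    rw [hphi, bN_cast G k w (i-1) hik]

lemma sum_tail_spine_eq (htree : G.IsTree) (hw : Function.Injective w)
    (hdeg : ∀ x : V, x ∈ Set.range w ↔ G.degree x ≠ 1)
    (hadj : ∀ i j : Fin (k + 1), G.Adj (w i) (w j) ↔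
      ((i : ℕ) + 1 = (j : ℕ) ∨ (j : ℕ) + 1 = (i : ℕ)))
    (v0 : V) (i : ℕ) (hi : i ≤ k) :
    ∑ e ∈ G.edgeFinset.filter (fun e => tailF G k w v0 e = wn k w i), (phiF G k w e : ℤ)
      = (if i < k then bZ k (cc G k w) i else 0) := by
  rw [filter_tail_spine G k w htree hw hdeg hadj v0 i hi]
  by_cases hik : i < k
  · rw [if_pos hik, if_pos hik, Finset.sum_singleton,
      phi_spine G k w hw i hik, bN_cast G k w i hik]
  · rw [if_neg hik, if_neg hik, Finset.sum_empty]

lemma sum_at_spine (htree : G.IsTree) (hw : Function.Injective w)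
    (hdeg : ∀ x : V, x ∈ Set.range w ↔ G.degree x ≠ 1)
    (hadj : ∀ i j : Fin (k + 1), G.Adj (w i) (w j) ↔
      ((i : ℕ) + 1 = (j : ℕ) ∨ (j : ℕ) + 1 = (i : ℕ)))
    (v0 : V) (i : ℕ) (hi : i ≤ k) :
    (∑ e ∈ G.edgeFinset.filter (fun e => headF G k w v0 e = wn k w i), (phiF G k w e : ℤ))
    - (∑ e ∈ G.edgeFinset.filter (fun e => tailF G k w v0 e = wn k w i), (phiF G k w e : ℤ))
      = sig k (cc G k w) i := by
  rw [sum_head_spine_eq G k w htree hw hdeg hadj v0 i hi,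
    sum_tail_spine_eq G k w htree hw hdeg hadj v0 i hi]
  rfl

lemma sum_at_leaf (htree : G.IsTree) (hw : Function.Injective w)
    (hdeg : ∀ x : V, x ∈ Set.range w ↔ G.degree x ≠ 1)
    (hadj : ∀ i j : Fin (k + 1), G.Adj (w i) (w j) ↔
      ((i : ℕ) + 1 = (j : ℕ) ∨ (j : ℕ) + 1 = (i : ℕ)))
    (v0 : V) (x : V) (hx : x ∉ Set.range w) :
    (∑ e ∈ G.edgeFinset.filter (fun e => headF G k w v0 e = x), (phiF G k w e : ℤ))
    - (∑ e ∈ G.edgeFinset.filter (fun e => tailF G k w v0 e = x), (phiF G k w e : ℤ))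
      = -(lab G k w x : ℤ) := by
  rw [filter_head_leaf G k w htree hw hdeg hadj v0 x hx,
    filter_tail_leaf G k w htree hw hdeg hadj v0 x hx,
    Finset.sum_empty, Finset.sum_singleton,
    phi_leaf G k w htree hdeg x hx]
  ring

end Graph5

end Stmt11

open Stmt11 in
/-- Every caterpillar admits an antimagic orientation: there is a
choice of direction (tail e, head e) for every edge e, and a bijection
φ : E(G) → {1,…,m}, such that the oriented vertex sums (incoming labels minus
outgoing labels, as integers) are pairwise distinct. -/
theorem stmt_11 {V : Type*} [Fintype V] (G : SimpleGraph V)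
    (hn : 3 ≤ Fintype.card V) (htree : G.IsTree)
    (hcat : ∃ (k : ℕ) (w : Fin (k + 1) → V), Function.Injective w ∧
      (∀ x : V, x ∈ Set.range w ↔ G.degree x ≠ 1) ∧
      (∀ i j : Fin (k + 1), G.Adj (w i) (w j) ↔
        ((i : ℕ) + 1 = (j : ℕ) ∨ (j : ℕ) + 1 = (i : ℕ)))) :
    ∃ (tail head : Sym2 V → V) (φ : Sym2 V → ℕ),
      (∀ e ∈ G.edgeSet, e = s(tail e, head e)) ∧
      Set.BijOn φ G.edgeSet (Set.Icc 1 G.edgeFinset.card) ∧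
      ∀ u v : V, u ≠ v →
        ((∑ e ∈ G.edgeFinset.filter (fun e => head e = u), (φ e : ℤ)) -
         (∑ e ∈ G.edgeFinset.filter (fun e => tail e = u), (φ e : ℤ))) ≠
        ((∑ e ∈ G.edgeFinset.filter (fun e => head e = v), (φ e : ℤ)) -
         (∑ e ∈ G.edgeFinset.filter (fun e => tail e = v), (φ e : ℤ))) := by
  obtain ⟨k, w, hw, hdeg, hadj⟩ := hcat
  have hend := cc_end G k w htree hw hdeg hadj hn
  have hm : G.edgeFinset.card = k + LL G k w := card_edges G k w htree hw hdeg hadj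
  have hrange : ∀ e ∈ G.edgeSet, phiF G k w e ∈ Finset.Icc 1 G.edgeFinset.card := by
    intro e he
    rcases edge_class G k w htree hdeg hadj e he with ⟨i, hi, rfl⟩ | ⟨x, hx, rfl⟩
    · rw [phi_spine G k w hw i hi, Finset.mem_Icc]
      have hb1 := bZ_ge_one k (cc G k w) i hi
      have hb2 := bZ_le_k k (cc G k w) i hi
      have hc := bN_cast G k w i hi
      constructor
      · omega
      · rw [hm]; omega
    · rw [phi_leaf G k w htree hdeg x hx]
      have := lab_bounds G k w htree hw hdeg x hx
      rw [Finset.mem_Icc, hm]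
      omega
  have hinj : ∀ e₁ ∈ G.edgeSet, ∀ e₂ ∈ G.edgeSet,
      phiF G k w e₁ = phiF G k w e₂ → e₁ = e₂ := by
    intro e1 he1 e2 he2 heq
    rcases edge_class G k w htree hdeg hadj e1 he1 with ⟨i, hi, rfl⟩ | ⟨x, hx, rfl⟩ <;>
      rcases edge_class G k w htree hdeg hadj e2 he2 with ⟨j, hj, rfl⟩ | ⟨y, hy, rfl⟩
    · rw [phi_spine G k w hw i hi, phi_spine G k w hw j hj] at heq
      have hci := bN_cast G k w i hi
      have hcj := bN_cast G k w j hj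
      have : bZ k (cc G k w) i = bZ k (cc G k w) j := by
        rw [← hci, ← hcj, heq]
      have hij : i = j := by
        by_contra hne
        exact bZ_inj k (cc G k w) i j hi hj hne this
      rw [hij]
    · exfalso
      rw [phi_spine G k w hw i hi, phi_leaf G k w htree hdeg y hy] at heq
      have hb2 := bZ_le_k k (cc G k w) i hi
      have hc := bN_cast G k w i hi
      have := (lab_bounds G k w htree hw hdeg y hy).1
      omega
    · exfalso
      rw [phi_spine G k w hw j hj, phi_leaf G k w htree hdeg x hx] at heq
      have hb2 := bZ_le_k k (cc G k w) j hj
      have hc := bN_cast G k w j hj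
      have := (lab_bounds G k w htree hw hdeg x hx).1
      omega
    · rw [phi_leaf G k w htree hdeg x hx, phi_leaf G k w htree hdeg y hy] at heq
      have hxy : x = y := by
        by_contra hne
        exact lab_injective G k w htree hw hdeg x y hx hy hne heq
      rw [hxy]
  refine ⟨tailF G k w (wn k w 0), headF G k w (wn k w 0), phiF G k w, ?_, ?_, ?_⟩
  · -- orientation is consistent
    intro e he
    rcases edge_class G k w htree hdeg hadj e he with ⟨i, hi, rfl⟩ | ⟨x, hx, rfl⟩
    · rw [tail_spine G k w hw _ i hi, head_spine G k w hw _ i hi]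
    · rw [tail_leaf G k w htree hdeg _ x hx, head_leaf G k w htree hdeg _ x hx]
  · -- bijectivity
    refine ⟨?_, ?_, ?_⟩
    · intro e he
      rw [← Finset.coe_Icc]
      exact_mod_cast hrange e he
    · intro e1 he1 e2 he2 heq
      exact hinj e1 he1 e2 he2 heq
    · -- surjectivity
      have himg : G.edgeFinset.image (phiF G k w) = Finset.Icc 1 G.edgeFinset.card := by
        apply Finset.eq_of_subset_of_card_le
        · intro t ht
          obtain ⟨e, he, rfl⟩ := Finset.mem_image.mp ht
          exact hrange e (SimpleGraph.mem_edgeFinset.mp he)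
        · rw [Nat.card_Icc]
          rw [Finset.card_image_of_injOn (fun e1 he1 e2 he2 heq =>
            hinj e1 (SimpleGraph.mem_edgeFinset.mp he1) e2
              (SimpleGraph.mem_edgeFinset.mp he2) heq)]
          omega
      intro t ht
      rw [← Finset.coe_Icc, Finset.mem_coe] at ht
      rw [← himg] at ht
      obtain ⟨e, he, rfl⟩ := Finset.mem_image.mp ht
      exact ⟨e, SimpleGraph.mem_edgeFinset.mp he, rfl⟩
  · -- distinct oriented vertex sums
    intro u v huv
    by_cases hu : u ∈ Set.range w <;> by_cases hv : v ∈ Set.range w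
    · obtain ⟨i, hi, hiu⟩ := SP_elim k w u hu
      obtain ⟨j, hj, hjv⟩ := SP_elim k w v hv
      subst hiu; subst hjv
      rw [sum_at_spine G k w htree hw hdeg hadj _ i hi,
        sum_at_spine G k w htree hw hdeg hadj _ j hj]
      have hij : i ≠ j := fun h => huv (by rw [h])
      exact sig_inj k (cc G k w) hend i j hi hj hij
    · obtain ⟨i, hi, hiu⟩ := SP_elim k w u hu
      subst hiu
      rw [sum_at_spine G k w htree hw hdeg hadj _ i hi,
        sum_at_leaf G k w htree hw hdeg hadj _ v hv]
      exact sig_ne_leaf k (cc G k w) hend i hi _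
        (lab_bounds G k w htree hw hdeg v hv).1
    · obtain ⟨j, hj, hjv⟩ := SP_elim k w v hv
      subst hjv
      rw [sum_at_leaf G k w htree hw hdeg hadj _ u hu,
        sum_at_spine G k w htree hw hdeg hadj _ j hj]
      intro h
      exact sig_ne_leaf k (cc G k w) hend j hj _
        (lab_bounds G k w htree hw hdeg u hu).1 h.symm
    · rw [sum_at_leaf G k w htree hw hdeg hadj _ u hu,
        sum_at_leaf G k w htree hw hdeg hadj _ v hv]
      intro h
      have : lab G k w u = lab G k w v := by exact_mod_cast neg_injective h
      exact lab_injective G k w htree hw hdeg u v hu hv huv this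
end

section
/- Let p ≥ 3 and m ≥ p. With path-edge labels φ(e_i) = ⌈i/2⌉ + U_i for i ≡ p (mod 2) and φ(e_i) = m − ⌊p/2⌋ + ⌈i/2⌉ for i ≢ p (mod 2), where (U_i) is non-decreasing with U_{i+2} ≥ U_i, suppose 1 ≤ j < k ≤ p−1. Then φ(e_j) + φ(e_{j+1}) < φ(e_k) + φ(e_{k+1}). -/
lemma umono (U : ℕ → ℕ) (hU : ∀ i, U i ≤ U (i + 2)) :
    ∀ n a, U a ≤ U (a + 2 * n) := by
  intro n
  induction n with
  | zero => intro a; simp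
  | succ n ih =>
      intro a
      calc U a ≤ U (a + 2) := hU a
        _ ≤ U (a + 2 + 2 * n) := ih (a + 2)
        _ = U (a + 2 * (n + 1)) := by ring_nf

lemma umono' (U : ℕ → ℕ) (hU : ∀ i, U i ≤ U (i + 2)) {a b : ℕ}
    (hab : a ≤ b) (hpar : a % 2 = b % 2) : U a ≤ U b := by
  have : b = a + 2 * ((b - a) / 2) := by omega
  rw [this]; exact umono U hU _ a

/-- With φ(e_i) = ⌈i/2⌉ + U_i for i ≡ p (mod 2) and
φ(e_i) = m − ⌊p/2⌋ + ⌈i/2⌉ for i ≢ p (mod 2), where (U_i) is non-decreasing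
along indices of equal parity, consecutive-pair sums are strictly increasing:
for 1 ≤ j < k ≤ p − 1 we have φ(e_j)+φ(e_{j+1}) < φ(e_k)+φ(e_{k+1}). -/
theorem stmt_17 (p m : ℕ) (hp : 3 ≤ p) (hm : p ≤ m)
    (U : ℕ → ℕ) (hU : ∀ i, U i ≤ U (i + 2))
    (φ : ℕ → ℕ)
    (hφ : ∀ i, 1 ≤ i → i ≤ p →
      φ i = if i % 2 = p % 2 then (i + 1) / 2 + U i else m - p / 2 + (i + 1) / 2) :
    ∀ j k, 1 ≤ j → j < k → k ≤ p - 1 →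
      φ j + φ (j + 1) < φ k + φ (k + 1) := by
  have key : ∀ i, 1 ≤ i → i + 1 ≤ p →
      φ i + φ (i + 1) = m - p / 2 + (i + 1) +
        (if i % 2 = p % 2 then U i else U (i + 1)) := by
    intro i hi1 hip
    rw [hφ i hi1 (by omega), hφ (i + 1) (by omega) hip]
    by_cases h : i % 2 = p % 2
    · have h2 : ¬ ((i + 1) % 2 = p % 2) := by omega
      simp only [h, h2, if_true, if_false]
      omega
    · have h2 : (i + 1) % 2 = p % 2 := by omega
      simp only [h, h2, if_true, if_false]
      omega
  intro j k hj hjk hk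
  rw [key j hj (by omega), key k (by omega) (by omega)]
  have hV : (if j % 2 = p % 2 then U j else U (j + 1)) ≤
      (if k % 2 = p % 2 then U k else U (k + 1)) := by
    by_cases h1 : j % 2 = p % 2 <;> by_cases h2 : k % 2 = p % 2 <;>
      simp only [h1, h2, if_true, if_false] <;>
      exact umono' U hU (by omega) (by omega)
  omega
end
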